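/- arXiv:1605.00939 — 4 statements merged into one kernel-verified Lean document; each statement's English description precedes it below -/
import Mathlib

section
/- Let 0 < m < n be integers, α ∈ [0,1], p ∈ [1,∞). There exists a constant Γ = Γ(m,p,α) ∈ (0,∞) such that for every Radon measure μ on ℝⁿ, every x ∈ ℝⁿ, and every R ∈ (0,∞], one has ∫_{B̄(x,R)∖{x}} Θ^m(μ,x,|x−y|)^{m−1} · β̊_{μ,p}(x,|x−y|)^p / |x−y|^{m+αp} dμ(y) ≤ Γ · ∫₀^{2R} Θ^m(μ,x,r)^m · β̊_{μ,p}(x,r)^p / r^{αp} · dr/r. -/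
open MeasureTheory Metric Set
open scoped ENNReal NNReal

noncomputable section

/-- Euclidean space ℝⁿ. -/
abbrev Euc (n : ℕ) : Type := EuclideanSpace ℝ (Fin n)

/-- `A(n,m)`: the set of `m`-dimensional affine planes in ℝⁿ. -/
def affPlanes (n m : ℕ) : Set (AffineSubspace ℝ (Euc n)) :=
  {L | (L : Set (Euc n)).Nonempty ∧ Module.finrank ℝ L.direction = m}

/-- `β_{μ,p}(x,r,L) = r⁻¹ (r^{-m} ∫_{B̄(x,r)} dist(y,L)^p dμ(y))^{1/p}`. -/
def betaL {n : ℕ} (μ : Measure (Euc n)) (m : ℕ) (p : ℝ) (x : Euc n) (r : ℝ)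
    (L : Set (Euc n)) : ℝ≥0∞ :=
  (ENNReal.ofReal r)⁻¹ *
    ((ENNReal.ofReal r ^ m)⁻¹ *
      ∫⁻ y in closedBall x r, ENNReal.ofReal (infDist y L ^ p) ∂μ) ^ (1 / p)

/-- non-centred `β_{μ,p}(x,r)`: infimum over all `m`-planes. -/
def betaInf {n : ℕ} (μ : Measure (Euc n)) (m : ℕ) (p : ℝ) (x : Euc n) (r : ℝ) : ℝ≥0∞ :=
  ⨅ L ∈ affPlanes n m, betaL μ m p x r (L : Set (Euc n))

/-- centred `β̊_{μ,p}(x,r)`: infimum over all `m`-planes passing through `x`. -/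
def betaInfC {n : ℕ} (μ : Measure (Euc n)) (m : ℕ) (p : ℝ) (x : Euc n) (r : ℝ) : ℝ≥0∞ :=
  ⨅ L ∈ {L ∈ affPlanes n m | x ∈ L}, betaL μ m p x r (L : Set (Euc n))

/-- `ω_m`: the Lebesgue measure of the unit ball in ℝ^m. -/
def ballVol (m : ℕ) : ℝ≥0∞ := volume (closedBall (0 : Euc m) 1)

/-- `Θ^m(μ,x,r) = μ(B̄(x,r)) / (ω_m r^m)`. -/
def theta {n : ℕ} (μ : Measure (Euc n)) (m : ℕ) (x : Euc n) (r : ℝ) : ℝ≥0∞ :=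
  μ (closedBall x r) / (ballVol m * ENNReal.ofReal r ^ m)

/-- `h_min(x₀,…,x_{m+1})`: minimal height of a simplex. -/
def hmin {n m : ℕ} (x : Fin (m + 2) → Euc n) : ℝ :=
  ⨅ j, infDist (x j) (affineSpan ℝ (Set.range x \ {x j}) : Set (Euc n))

/-- `K_{μ,p}^α(x,R)`, with `R ∈ (0,∞]` an extended real. -/
def Kcurv {n : ℕ} (μ : Measure (Euc n)) (m : ℕ) (p α : ℝ) (x : Euc n) (R : ℝ≥0∞) : ℝ≥0∞ :=
  ∫⁻ z in Set.univ.pi (fun _ : Fin (m + 1) => EMetric.closedBall x R),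
    ENNReal.ofReal
      (hmin (Fin.cons x z) ^ p /
        Metric.diam (Set.range (Fin.cons x z)) ^ ((m * (m + 1) : ℝ) + (1 + α) * p))
    ∂(Measure.pi fun _ : Fin (m + 1) => μ)

/-- The interval `(0, c)` of real numbers, with extended-real right endpoint. -/
def IooE (c : ℝ≥0∞) : Set ℝ := {r : ℝ | 0 < r ∧ ENNReal.ofReal r < c}

/-- `U(x,y) = {(z₁,…,z_m) : |z_j − x| ≤ |y − x|}`. -/
def Uset {n : ℕ} (m : ℕ) (x y : Euc n) : Set (Fin m → Euc n) :=
  {z | ∀ j, dist (z j) x ≤ dist y x}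

/-- `E(x,y)`. -/
def Ecurv {n : ℕ} (μ : Measure (Euc n)) (m : ℕ) (p α : ℝ) (x y : Euc n) : ℝ≥0∞ :=
  ∫⁻ z in Uset m x y,
    ENNReal.ofReal
      (hmin (Fin.cons x (Fin.cons y z)) ^ p /
        Metric.diam (Set.range (Fin.cons x (Fin.cons y z))) ^
          ((m * (m + 1) : ℝ) + (1 + α) * p))
    ∂(Measure.pi fun _ : Fin m => μ)

/-- The half-open cube with centre `c` and side length `l`. -/
def cube {n : ℕ} (c : Fin n → ℝ) (l : ℝ) : Set (Euc n) :=
  {y | ∀ i, y i ∈ Set.Ico (c i - l / 2) (c i + l / 2)}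

/-- `β_{μ,p}(Q,L)` for a cube `Q` with side length `l`. -/
def betaQL {n : ℕ} (μ : Measure (Euc n)) (m : ℕ) (p : ℝ) (Q : Set (Euc n)) (l : ℝ)
    (L : Set (Euc n)) : ℝ≥0∞ :=
  (ENNReal.ofReal l)⁻¹ *
    ((ENNReal.ofReal l ^ m)⁻¹ * ∫⁻ y in Q, ENNReal.ofReal (infDist y L ^ p) ∂μ) ^ (1 / p)

/-- `β_{μ,p}(Q)` for a cube `Q` with side length `l`. -/
def betaQInf {n : ℕ} (μ : Measure (Euc n)) (m : ℕ) (p : ℝ) (Q : Set (Euc n)) (l : ℝ) : ℝ≥0∞ :=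
  ⨅ L ∈ affPlanes n m, betaQL μ m p Q l (L : Set (Euc n))

/-- The centre of the dyadic cube `2^{-k}(a + [0,1)ⁿ)`. -/
def dyadicCenter {n : ℕ} (k : ℤ) (a : Fin n → ℤ) : Fin n → ℝ :=
  fun i => ((a i : ℝ) + 1 / 2) * 2 ^ (-k)

/-- The dyadic cube `2^{-k}(a + [0,1)ⁿ)`. -/
def dyadicCube {n : ℕ} (k : ℤ) (a : Fin n → ℤ) : Set (Euc n) :=
  cube (dyadicCenter k a) (2 ^ (-k))

/-- `S ⊆ ℝⁿ` is an m-dimensional submanifold of class C¹. -/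
def IsC1Submanifold {n : ℕ} (m : ℕ) (S : Set (Euc n)) : Prop :=
  ∀ x ∈ S, ∃ (U : Set (Euc n)) (V : Set (Euc m)) (f : Euc m → Euc n),
    IsOpen U ∧ x ∈ U ∧ IsOpen V ∧ ContDiffOn ℝ 1 f V ∧ InjOn f V ∧
    f '' V = S ∩ U ∧ ∀ y ∈ V, Function.Injective (fderivWithin ℝ f V y)

/-- The support of a measure: points all of whose neighbourhoods have positive measure. -/
def sptMeasure {n : ℕ} (μ : Measure (Euc n)) : Set (Euc n) :=
  {x | ∀ ε : ℝ, 0 < ε → 0 < μ (ball x ε)}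

/-- `κ(x₀,…,x_{m+1}) = H^{m+1}(conv{x₀,…,x_{m+1}}) / diam^{m+1}`. -/
def kappa {n m : ℕ} (x : Fin (m + 2) → Euc n) : ℝ≥0∞ :=
  μH[(m + 1 : ℝ)] (convexHull ℝ (Set.range x)) /
    ENNReal.ofReal (Metric.diam (Set.range x) ^ (m + 1))

/-- `M_p(μ)`. -/
def Mp {n : ℕ} (μ : Measure (Euc n)) (m : ℕ) (p : ℝ) : ℝ≥0∞ :=
  ∫⁻ x : Fin (m + 2) → Euc n,
    kappa x ^ p / ENNReal.ofReal (Metric.diam (Set.range x) ^ p)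
    ∂(Measure.pi fun _ : Fin (m + 2) => μ)

section AuxStmt9

open ENNReal

variable {n : ℕ}

/-- Auxiliary: infimum over centred planes of the `p`-distance integral. -/
def Jfun (μ : Measure (Euc n)) (m : ℕ) (p : ℝ) (x : Euc n) (r : ℝ) : ℝ≥0∞ :=
  ⨅ L ∈ {L ∈ affPlanes n m | x ∈ L},
    ∫⁻ y in closedBall x r, ENNReal.ofReal (infDist y (L : Set (Euc n)) ^ p) ∂μ

lemma Jfun_mono (μ : Measure (Euc n)) (m : ℕ) (p : ℝ) (x : Euc n) :
    Monotone (Jfun μ m p x) := fun _ _ hab =>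
  iInf₂_mono fun _ _ => lintegral_mono_set (closedBall_subset_closedBall hab)

lemma ennreal_rpow_iInf {ι : Sort*} (g : ι → ℝ≥0∞) {y : ℝ} (hy : 0 < y) :
    (⨅ i, g i) ^ y = ⨅ i, g i ^ y := by
  simpa only [ENNReal.orderIsoRpow_apply] using (ENNReal.orderIsoRpow y hy).map_iInf g

lemma betaInfC_eq (μ : Measure (Euc n)) (m : ℕ) {p : ℝ} (hp : 1 ≤ p) (x : Euc n) {r : ℝ}
    (hr : 0 < r) :
    betaInfC μ m p x r
      = (ENNReal.ofReal r)⁻¹ * ((ENNReal.ofReal r ^ m)⁻¹ * Jfun μ m p x r) ^ (1 / p) := by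
  have hp0 : (0:ℝ) < 1 / p := by positivity
  have hr0 : ENNReal.ofReal r ≠ 0 := by simp [ENNReal.ofReal_eq_zero]; linarith
  have hrt : ENNReal.ofReal r ≠ ∞ := ENNReal.ofReal_ne_top
  have hc0 : ((ENNReal.ofReal r ^ m)⁻¹ : ℝ≥0∞) ≠ 0 :=
    ENNReal.inv_ne_zero.2 (ENNReal.pow_ne_top hrt)
  have hct : ((ENNReal.ofReal r ^ m)⁻¹ : ℝ≥0∞) ≠ ∞ :=
    ENNReal.inv_ne_top.2 (pow_ne_zero _ hr0)
  have hcp0 : ((ENNReal.ofReal r ^ m)⁻¹ : ℝ≥0∞) ^ (1/p) ≠ 0 := by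
    simp [ENNReal.rpow_eq_zero_iff, hc0, hct, hp0]
  have hcpt : ((ENNReal.ofReal r ^ m)⁻¹ : ℝ≥0∞) ^ (1/p) ≠ ∞ :=
    ENNReal.rpow_ne_top_of_nonneg hp0.le hct
  have hd0 : (ENNReal.ofReal r)⁻¹ * ((ENNReal.ofReal r ^ m)⁻¹ : ℝ≥0∞) ^ (1/p) ≠ 0 :=
    mul_ne_zero (ENNReal.inv_ne_zero.2 hrt) hcp0
  have hdt : (ENNReal.ofReal r)⁻¹ * ((ENNReal.ofReal r ^ m)⁻¹ : ℝ≥0∞) ^ (1/p) ≠ ∞ :=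
    ENNReal.mul_ne_top (ENNReal.inv_ne_top.2 hr0) hcpt
  unfold betaInfC betaL Jfun
  rw [ENNReal.mul_rpow_of_nonneg _ _ hp0.le, ← mul_assoc]
  rw [ennreal_rpow_iInf _ hp0]
  rw [ENNReal.mul_iInf_of_ne hd0 hdt]
  refine iInf_congr fun L => ?_
  rw [ennreal_rpow_iInf _ hp0, ENNReal.mul_iInf_of_ne hd0 hdt]
  refine iInf_congr fun _ => ?_
  rw [ENNReal.mul_rpow_of_nonneg _ _ hp0.le, mul_assoc]

lemma ofReal_two_mul (d : ℝ) (hd : 0 ≤ d) :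
    ENNReal.ofReal (2 * d) = 2 * ENNReal.ofReal d := by
  rw [ENNReal.ofReal_mul (by norm_num : (0:ℝ) ≤ 2)]
  norm_num

lemma inv_le_two_inv {D Rr : ℝ≥0∞} (h : Rr ≤ 2 * D) : D⁻¹ ≤ 2 * Rr⁻¹ := by
  have h1 : (2 * D)⁻¹ ≤ Rr⁻¹ := ENNReal.inv_le_inv' h
  calc D⁻¹ = 2 * (2 * D)⁻¹ := by
        rw [ENNReal.mul_inv (Or.inl two_ne_zero) (Or.inl ENNReal.ofNat_ne_top), ← mul_assoc,
          ENNReal.mul_inv_cancel two_ne_zero ENNReal.ofNat_ne_top, one_mul]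
    _ ≤ 2 * Rr⁻¹ := mul_le_mul_right h1 2

lemma theta_compare (μ : Measure (Euc n)) (m : ℕ) (x : Euc n) {d r : ℝ}
    (hd : 0 < d) (hdr : d ≤ r) (hr2 : r ≤ 2 * d) :
    theta μ m x d ≤ 2 ^ m * theta μ m x r := by
  have hr : 0 < r := hd.trans_le hdr
  set D := ENNReal.ofReal d
  set Rr := ENNReal.ofReal r
  have h2m0 : ((2:ℝ≥0∞) ^ m) ≠ 0 := by positivity
  have h2mt : ((2:ℝ≥0∞) ^ m) ≠ ∞ := ENNReal.pow_ne_top ENNReal.ofNat_ne_top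
  have hRr2D : Rr ≤ 2 * D := by
    rw [← ofReal_two_mul d hd.le]; exact ENNReal.ofReal_le_ofReal hr2
  have hμ : μ (closedBall x d) ≤ μ (closedBall x r) :=
    measure_mono (closedBall_subset_closedBall hdr)
  have hden : ballVol m * Rr ^ m ≤ 2 ^ m * (ballVol m * D ^ m) := by
    have : Rr ^ m ≤ 2 ^ m * D ^ m := by
      calc Rr ^ m ≤ (2 * D) ^ m := pow_le_pow_left₀ zero_le hRr2D m
        _ = 2 ^ m * D ^ m := mul_pow 2 D m
    calc ballVol m * Rr ^ m ≤ ballVol m * (2 ^ m * D ^ m) := mul_le_mul_right this _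
      _ = 2 ^ m * (ballVol m * D ^ m) := by ring
  unfold theta
  rw [← mul_div_assoc]
  calc μ (closedBall x d) / (ballVol m * D ^ m)
      = 2 ^ m * μ (closedBall x d) / (2 ^ m * (ballVol m * D ^ m)) :=
        (ENNReal.mul_div_mul_left _ _ h2m0 h2mt).symm
    _ ≤ 2 ^ m * μ (closedBall x r) / (ballVol m * Rr ^ m) :=
        ENNReal.div_le_div (mul_le_mul_right hμ _) hden

lemma betaInfC_compare (μ : Measure (Euc n)) (m : ℕ) {p : ℝ} (hp : 1 ≤ p) (x : Euc n)
    {d r : ℝ} (hd : 0 < d) (hdr : d ≤ r) (hr2 : r ≤ 2 * d) :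
    betaInfC μ m p x d ≤ 2 ^ (m + 1) * betaInfC μ m p x r := by
  have hr : 0 < r := hd.trans_le hdr
  have hp0 : (0:ℝ) < 1 / p := by positivity
  rw [betaInfC_eq μ m hp x hd, betaInfC_eq μ m hp x hr]
  set D := ENNReal.ofReal d
  set Rr := ENNReal.ofReal r
  have hRr2D : Rr ≤ 2 * D := by
    rw [← ofReal_two_mul d hd.le]; exact ENNReal.ofReal_le_ofReal hr2
  have h1 : D⁻¹ ≤ 2 * Rr⁻¹ := inv_le_two_inv hRr2D
  have h2 : (D ^ m)⁻¹ * Jfun μ m p x d ≤ (2:ℝ≥0∞) ^ m * ((Rr ^ m)⁻¹ * Jfun μ m p x r) := by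
    have hmm : (D ^ m)⁻¹ ≤ 2 ^ m * (Rr ^ m)⁻¹ := by
      have : Rr ^ m ≤ 2 ^ m * D ^ m := by
        calc Rr ^ m ≤ (2 * D) ^ m := pow_le_pow_left₀ zero_le hRr2D m
          _ = 2 ^ m * D ^ m := mul_pow 2 D m
      calc (D ^ m)⁻¹ = 2 ^ m * (2 ^ m * D ^ m)⁻¹ := by
            rw [ENNReal.mul_inv (Or.inl (by positivity)) (Or.inl (ENNReal.pow_ne_top
              ENNReal.ofNat_ne_top)), ← mul_assoc, ENNReal.mul_inv_cancel (by positivity)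
              (ENNReal.pow_ne_top ENNReal.ofNat_ne_top), one_mul]
        _ ≤ 2 ^ m * (Rr ^ m)⁻¹ := mul_le_mul_right (ENNReal.inv_le_inv' this) _
    calc (D ^ m)⁻¹ * Jfun μ m p x d ≤ (2 ^ m * (Rr ^ m)⁻¹) * Jfun μ m p x r :=
          mul_le_mul' hmm (Jfun_mono μ m p x hdr)
      _ = 2 ^ m * ((Rr ^ m)⁻¹ * Jfun μ m p x r) := mul_assoc _ _ _
  have h3 : ((D ^ m)⁻¹ * Jfun μ m p x d) ^ (1/p)
      ≤ (2:ℝ≥0∞) ^ m * ((Rr ^ m)⁻¹ * Jfun μ m p x r) ^ (1/p) := by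
    calc ((D ^ m)⁻¹ * Jfun μ m p x d) ^ (1/p)
        ≤ ((2:ℝ≥0∞) ^ m * ((Rr ^ m)⁻¹ * Jfun μ m p x r)) ^ (1/p) :=
          ENNReal.rpow_le_rpow h2 hp0.le
      _ = ((2:ℝ≥0∞) ^ m) ^ (1/p) * ((Rr ^ m)⁻¹ * Jfun μ m p x r) ^ (1/p) :=
          ENNReal.mul_rpow_of_nonneg _ _ hp0.le
      _ ≤ (2:ℝ≥0∞) ^ m * ((Rr ^ m)⁻¹ * Jfun μ m p x r) ^ (1/p) := by
          apply mul_le_mul_left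
          rw [← ENNReal.rpow_natCast 2 m, ← ENNReal.rpow_mul]
          apply ENNReal.rpow_le_rpow_of_exponent_le (by norm_num)
          rw [mul_one_div]
          exact div_le_self (by positivity) hp
  calc D⁻¹ * ((D ^ m)⁻¹ * Jfun μ m p x d) ^ (1/p)
      ≤ (2 * Rr⁻¹) * ((2:ℝ≥0∞) ^ m * ((Rr ^ m)⁻¹ * Jfun μ m p x r) ^ (1/p)) :=
        mul_le_mul' h1 h3
    _ = 2 ^ (m + 1) * (Rr⁻¹ * ((Rr ^ m)⁻¹ * Jfun μ m p x r) ^ (1/p)) := by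
        rw [pow_succ]; ring

/-- The constant in the pointwise comparison step. -/
def Cst (m : ℕ) (p e : ℝ) : ℝ≥0∞ :=
  (2:ℝ≥0∞) ^ (m * (m - 1)) * ((2:ℝ≥0∞) ^ (m + 1)) ^ p * (2:ℝ≥0∞) ^ e

lemma Cst_ne_zero (m : ℕ) {p e : ℝ} (hp : 0 ≤ p) (he : 0 ≤ e) : Cst m p e ≠ 0 := by
  unfold Cst
  have h1 : ((2:ℝ≥0∞) ^ (m + 1)) ^ p ≠ 0 :=
    (ENNReal.rpow_pos (by positivity) (ENNReal.pow_ne_top ENNReal.ofNat_ne_top)).ne'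
  have h2 : ((2:ℝ≥0∞)) ^ e ≠ 0 :=
    (ENNReal.rpow_pos (by norm_num) ENNReal.ofNat_ne_top).ne'
  exact mul_ne_zero (mul_ne_zero (pow_ne_zero _ two_ne_zero) h1) h2
lemma Cst_ne_top (m : ℕ) {p e : ℝ} (hp : 0 ≤ p) (he : 0 ≤ e) : Cst m p e ≠ ∞ := by
  unfold Cst
  exact ENNReal.mul_ne_top (ENNReal.mul_ne_top (ENNReal.pow_ne_top ENNReal.ofNat_ne_top)
    (ENNReal.rpow_ne_top_of_nonneg hp (ENNReal.pow_ne_top ENNReal.ofNat_ne_top)))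
    (ENNReal.rpow_ne_top_of_nonneg he ENNReal.ofNat_ne_top)

lemma stepAi (μ : Measure (Euc n)) (m : ℕ) {p e : ℝ} (hp : 1 ≤ p) (he : 0 ≤ e)
    (x : Euc n) {d r : ℝ} (hd : 0 < d) (hdr : d ≤ r) (hr2 : r ≤ 2 * d) :
    theta μ m x d ^ (m - 1) * betaInfC μ m p x d ^ p / ENNReal.ofReal (d ^ e)
      ≤ Cst m p e *
        (theta μ m x r ^ (m - 1) * betaInfC μ m p x r ^ p * ((ENNReal.ofReal r) ^ e)⁻¹) := by
  have hr : 0 < r := hd.trans_le hdr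
  have hp0 : (0:ℝ) ≤ p := by linarith
  set D := ENNReal.ofReal d
  set Rr := ENNReal.ofReal r
  have hRr2D : Rr ≤ 2 * D := by
    rw [← ofReal_two_mul d hd.le]; exact ENNReal.ofReal_le_ofReal hr2
  have h2e0 : ((2:ℝ≥0∞) ^ e) ≠ 0 := (ENNReal.rpow_pos (by norm_num) ENNReal.ofNat_ne_top).ne'
  have h2et : ((2:ℝ≥0∞) ^ e) ≠ ∞ := ENNReal.rpow_ne_top_of_nonneg he ENNReal.ofNat_ne_top
  have ha : theta μ m x d ^ (m - 1) ≤ (2 ^ m * theta μ m x r) ^ (m - 1) :=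
    pow_le_pow_left₀ zero_le (theta_compare μ m x hd hdr hr2) _
  have hb : betaInfC μ m p x d ^ p ≤ (2 ^ (m + 1) * betaInfC μ m p x r) ^ p :=
    ENNReal.rpow_le_rpow (betaInfC_compare μ m hp x hd hdr hr2) hp0
  have hc : (ENNReal.ofReal (d ^ e))⁻¹ ≤ (2:ℝ≥0∞) ^ e * (Rr ^ e)⁻¹ := by
    rw [← ENNReal.ofReal_rpow_of_pos hd]
    have h1 : Rr ^ e ≤ (2:ℝ≥0∞) ^ e * D ^ e := by
      rw [← ENNReal.mul_rpow_of_nonneg _ _ he]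
      exact ENNReal.rpow_le_rpow hRr2D he
    calc (D ^ e)⁻¹ = (2:ℝ≥0∞) ^ e * ((2:ℝ≥0∞) ^ e * D ^ e)⁻¹ := by
          rw [ENNReal.mul_inv (Or.inl h2e0) (Or.inl h2et), ← mul_assoc,
            ENNReal.mul_inv_cancel h2e0 h2et, one_mul]
      _ ≤ (2:ℝ≥0∞) ^ e * (Rr ^ e)⁻¹ := mul_le_mul_right (ENNReal.inv_le_inv' h1) _
  rw [div_eq_mul_inv]
  calc theta μ m x d ^ (m - 1) * betaInfC μ m p x d ^ p * (ENNReal.ofReal (d ^ e))⁻¹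
      ≤ (2 ^ m * theta μ m x r) ^ (m - 1) * ((2:ℝ≥0∞) ^ (m + 1) * betaInfC μ m p x r) ^ p *
        ((2:ℝ≥0∞) ^ e * (Rr ^ e)⁻¹) := mul_le_mul' (mul_le_mul' ha hb) hc
    _ = Cst m p e *
        (theta μ m x r ^ (m - 1) * betaInfC μ m p x r ^ p * (Rr ^ e)⁻¹) := by
        rw [mul_pow, ← pow_mul, ENNReal.mul_rpow_of_nonneg _ _ hp0]
        unfold Cst; ring

/-- A measurable majorant function of `r`. -/
def Wfun (μ : Measure (Euc n)) (m : ℕ) (p e : ℝ) (x : Euc n) (r : ℝ) : ℝ≥0∞ :=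
  (ENNReal.ofReal r)⁻¹ *
    ((μ (closedBall x r) / (ballVol m * ENNReal.ofReal r ^ m)) ^ (m - 1) *
      ((ENNReal.ofReal r)⁻¹ * ((ENNReal.ofReal r ^ m)⁻¹ * Jfun μ m p x r) ^ (1 / p)) ^ p) *
    ((ENNReal.ofReal r) ^ e)⁻¹

lemma Wfun_measurable (μ : Measure (Euc n)) (m : ℕ) (p e : ℝ) (x : Euc n) :
    Measurable (Wfun μ m p e x) := by
  have hof : Measurable fun r : ℝ => ENNReal.ofReal r := ENNReal.measurable_ofReal
  have hmu : Measurable fun r : ℝ => μ (closedBall x r) :=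
    Monotone.measurable fun a b hab => measure_mono (closedBall_subset_closedBall hab)
  have hJ : Measurable (Jfun μ m p x) := (Jfun_mono μ m p x).measurable
  unfold Wfun
  exact ((hof.inv.mul
    (((hmu.div (measurable_const.mul (hof.pow_const m))).pow_const (m - 1)).mul
      ((hof.inv.mul (((hof.pow_const m).inv.mul hJ).pow measurable_const)).pow
        measurable_const))).mul (hof.pow measurable_const).inv)

lemma Wfun_eq (μ : Measure (Euc n)) (m : ℕ) {p : ℝ} (e : ℝ) (hp : 1 ≤ p) (x : Euc n)
    {r : ℝ} (hr : 0 < r) :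
    Wfun μ m p e x r = (ENNReal.ofReal r)⁻¹ *
      (theta μ m x r ^ (m - 1) * betaInfC μ m p x r ^ p) * ((ENNReal.ofReal r) ^ e)⁻¹ := by
  rw [betaInfC_eq μ m hp x hr]; rfl

lemma stepA (μ : Measure (Euc n)) (m : ℕ) {p e : ℝ} (hp : 1 ≤ p) (he : 0 ≤ e)
    (x : Euc n) {d : ℝ} (hd : 0 < d) :
    theta μ m x d ^ (m - 1) * betaInfC μ m p x d ^ p / ENNReal.ofReal (d ^ e)
      ≤ (2 * Cst m p e) * ∫⁻ r in Set.Ioo d (2 * d), Wfun μ m p e x r := by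
  have hD0 : ENNReal.ofReal d ≠ 0 := by simp [ENNReal.ofReal_eq_zero]; linarith
  have hDt : ENNReal.ofReal d ≠ ∞ := ENNReal.ofReal_ne_top
  set F := theta μ m x d ^ (m - 1) * betaInfC μ m p x d ^ p / ENNReal.ofReal (d ^ e) with hF
  have key : ∀ r ∈ Set.Ioo d (2 * d),
      (ENNReal.ofReal d)⁻¹ * F ≤ (2 * Cst m p e) * Wfun μ m p e x r := by
    intro r hrm
    obtain ⟨h1, h2⟩ := hrm
    have hr : 0 < r := hd.trans h1
    have hRr2D : ENNReal.ofReal r ≤ 2 * ENNReal.ofReal d := by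
      rw [← ofReal_two_mul d hd.le]; exact ENNReal.ofReal_le_ofReal h2.le
    have hinv : (ENNReal.ofReal d)⁻¹ ≤ 2 * (ENNReal.ofReal r)⁻¹ := inv_le_two_inv hRr2D
    calc (ENNReal.ofReal d)⁻¹ * F
        ≤ (2 * (ENNReal.ofReal r)⁻¹) * (Cst m p e *
            (theta μ m x r ^ (m - 1) * betaInfC μ m p x r ^ p *
              ((ENNReal.ofReal r) ^ e)⁻¹)) :=
          mul_le_mul' hinv (stepAi μ m hp he x hd h1.le h2.le)
      _ = (2 * Cst m p e) * ((ENNReal.ofReal r)⁻¹ *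
            (theta μ m x r ^ (m - 1) * betaInfC μ m p x r ^ p) *
            ((ENNReal.ofReal r) ^ e)⁻¹) := by ring
      _ = (2 * Cst m p e) * Wfun μ m p e x r := by rw [Wfun_eq μ m e hp x hr]
  have hvol : (volume (Set.Ioo d (2 * d)) : ℝ≥0∞) = ENNReal.ofReal d := by
    rw [Real.volume_Ioo]; congr 1; ring
  calc F = ((ENNReal.ofReal d)⁻¹ * F) * ENNReal.ofReal d := by
        rw [mul_comm ((ENNReal.ofReal d)⁻¹) F, mul_assoc,
          ENNReal.inv_mul_cancel hD0 hDt, mul_one]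
    _ = ∫⁻ _ in Set.Ioo d (2 * d), (ENNReal.ofReal d)⁻¹ * F := by
        rw [setLIntegral_const, hvol]
    _ ≤ ∫⁻ r in Set.Ioo d (2 * d), (2 * Cst m p e) * Wfun μ m p e x r :=
        setLIntegral_mono' measurableSet_Ioo key
    _ = (2 * Cst m p e) * ∫⁻ r in Set.Ioo d (2 * d), Wfun μ m p e x r :=
        lintegral_const_mul' _ _ (ENNReal.mul_ne_top ENNReal.ofNat_ne_top (Cst_ne_top m
          (by linarith) he))

lemma ballVol_ne_zero (m : ℕ) : ballVol m ≠ 0 :=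
  (measure_closedBall_pos volume (0 : Euc m) one_pos).ne'

lemma ballVol_ne_top (m : ℕ) : ballVol m ≠ ∞ :=
  measure_closedBall_lt_top.ne

lemma stepF (μ : Measure (Euc n)) {m : ℕ} (hm : 0 < m) {p : ℝ} (hp : 1 ≤ p) {α : ℝ}
    (hα : 0 ≤ α) (x : Euc n) {r : ℝ} (hr : 0 < r) :
    Wfun μ m p ((m : ℝ) + α * p) x r * μ (closedBall x r)
      = ballVol m * (theta μ m x r ^ m * betaInfC μ m p x r ^ p /
          ENNReal.ofReal (r ^ (α * p)) * ENNReal.ofReal (1 / r)) := by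
  set Rr := ENNReal.ofReal r with hRr_def
  have hRr0 : Rr ≠ 0 := by simp [hRr_def, ENNReal.ofReal_eq_zero]; linarith
  have hRrt : Rr ≠ ∞ := ENNReal.ofReal_ne_top
  have hX0 : ballVol m * Rr ^ m ≠ 0 := mul_ne_zero (ballVol_ne_zero m) (pow_ne_zero _ hRr0)
  have hXt : ballVol m * Rr ^ m ≠ ∞ :=
    ENNReal.mul_ne_top (ballVol_ne_top m) (ENNReal.pow_ne_top hRrt)
  have hμB : theta μ m x r * (ballVol m * Rr ^ m) = μ (closedBall x r) :=
    ENNReal.div_mul_cancel hX0 hXt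
  have hsplit : Rr ^ ((m : ℝ) + α * p) = Rr ^ m * Rr ^ (α * p) := by
    rw [ENNReal.rpow_add _ _ hRr0 hRrt, ENNReal.rpow_natCast]
  have hcancel : ((Rr ^ m)⁻¹ : ℝ≥0∞) * Rr ^ m = 1 :=
    ENNReal.inv_mul_cancel (pow_ne_zero _ hRr0) (ENNReal.pow_ne_top hRrt)
  have hof1 : ENNReal.ofReal (r ^ (α * p)) = Rr ^ (α * p) :=
    (ENNReal.ofReal_rpow_of_pos hr).symm
  have hof2 : ENNReal.ofReal (1 / r) = Rr⁻¹ := by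
    rw [one_div, ENNReal.ofReal_inv_of_pos hr]
  rw [Wfun_eq μ m ((m : ℝ) + α * p) hp x hr, ← hμB, hof1, hof2, div_eq_mul_inv, hsplit,
    ENNReal.mul_inv (Or.inl (pow_ne_zero _ hRr0)) (Or.inl (ENNReal.pow_ne_top hRrt))]
  calc Rr⁻¹ * (theta μ m x r ^ (m - 1) * betaInfC μ m p x r ^ p) *
        ((Rr ^ m)⁻¹ * (Rr ^ (α * p))⁻¹) * (theta μ m x r * (ballVol m * Rr ^ m))
      = ballVol m * ((theta μ m x r ^ (m - 1) * theta μ m x r) * betaInfC μ m p x r ^ p *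
          (Rr ^ (α * p))⁻¹ * Rr⁻¹) * ((Rr ^ m)⁻¹ * Rr ^ m) := by ring
    _ = ballVol m * (theta μ m x r ^ m * betaInfC μ m p x r ^ p *
          (Rr ^ (α * p))⁻¹ * Rr⁻¹) := by
        rw [hcancel, mul_one, ← pow_succ, Nat.sub_add_cancel hm]
    _ = ballVol m * (theta μ m x r ^ m * betaInfC μ m p x r ^ p *
          (Rr ^ (α * p))⁻¹ * Rr⁻¹) := rfl

end AuxStmt9

/-- Estimate (fst-int): with `Γ = Γ(m,p,α)`,
`∫_{B̄(x,R)∖{x}} Θ^{m-1} β̊^p |x−y|^{-m-αp} dμ(y) ≤ Γ ∫₀^{2R} Θ^m β̊^p r^{-αp} dr/r`. -/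
theorem stmt9 (m : ℕ) (hm : 0 < m) (p α : ℝ) (hp : 1 ≤ p) (hα0 : 0 ≤ α) (hα1 : α ≤ 1) :
    ∃ Γ : ℝ≥0∞, 0 < Γ ∧ Γ ≠ ∞ ∧
      ∀ (n : ℕ), m < n → ∀ (μ : Measure (Euc n)) [IsLocallyFiniteMeasure μ],
      ∀ (x : Euc n) (R : ℝ≥0∞), 0 < R →
        (∫⁻ y in EMetric.closedBall x R \ {x},
            theta μ m x (dist x y) ^ (m - 1) * betaInfC μ m p x (dist x y) ^ p /
              ENNReal.ofReal (dist x y ^ ((m : ℝ) + α * p)) ∂μ)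
          ≤ Γ * ∫⁻ r in IooE (2 * R),
              theta μ m x r ^ m * betaInfC μ m p x r ^ p / ENNReal.ofReal (r ^ (α * p)) *
                ENNReal.ofReal (1 / r) := by
  have hp0 : (0:ℝ) ≤ p := by linarith
  set e : ℝ := (m : ℝ) + α * p with he_def
  have he : 0 ≤ e := by positivity
  have hC2t : (2 : ℝ≥0∞) * Cst m p e ≠ ∞ :=
    ENNReal.mul_ne_top ENNReal.ofNat_ne_top (Cst_ne_top m hp0 he)
  have hC20 : (2 : ℝ≥0∞) * Cst m p e ≠ 0 := mul_ne_zero two_ne_zero (Cst_ne_zero m hp0 he)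
  refine ⟨2 * Cst m p e * ballVol m, ?_, ?_, ?_⟩
  · exact pos_iff_ne_zero.2 (mul_ne_zero hC20 (ballVol_ne_zero m))
  · exact ENNReal.mul_ne_top hC2t (ballVol_ne_top m)
  intro n hmn μ _ x R hR
  set A : Set (Euc n) := EMetric.closedBall x R \ {x} with hA_def
  have hAm : MeasurableSet A := by
    have h1 : EMetric.closedBall x R = (fun y : Euc n => edist y x) ⁻¹' Set.Iic R := rfl
    exact (h1 ▸ (continuous_id.edist continuous_const).measurable measurableSet_Iic).diff
      (measurableSet_singleton x)
  set W : ℝ → ℝ≥0∞ := Wfun μ m p e x with hW_def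
  have hWm : Measurable W := Wfun_measurable μ m p e x
  -- measurable sets used below
  have hSrm : ∀ r : ℝ, MeasurableSet {y : Euc n | dist x y < r ∧ r < 2 * dist x y} := by
    intro r
    have hdm : Measurable fun y : Euc n => dist x y := measurable_const.dist measurable_id
    exact (measurableSet_lt hdm measurable_const).inter
      (measurableSet_lt measurable_const (hdm.const_mul 2))
  have hIooE : MeasurableSet (IooE (2 * R)) := by
    have h1 : IooE (2 * R) = Set.Ioi (0:ℝ) ∩ (fun r => ENNReal.ofReal r) ⁻¹' Set.Iio (2 * R) :=
      rfl
    rw [h1]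
    exact measurableSet_Ioi.inter (ENNReal.measurable_ofReal measurableSet_Iio)
  -- Step A: pointwise bound on the inner integrand
  have h1 : (∫⁻ y in A,
      theta μ m x (dist x y) ^ (m - 1) * betaInfC μ m p x (dist x y) ^ p /
        ENNReal.ofReal (dist x y ^ e) ∂μ)
      ≤ ∫⁻ y in A, (2 * Cst m p e) * (∫⁻ r in Set.Ioo (dist x y) (2 * dist x y), W r) ∂μ := by
    refine setLIntegral_mono' hAm fun y hy => ?_
    have hyx : y ≠ x := by
      have := hy.2; simpa using this
    have hd : 0 < dist x y := dist_pos.2 (Ne.symm hyx)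
    exact stepA μ m hp he x hd
  -- pull the constant out and swap the integrals
  have h2 : (∫⁻ y in A, (2 * Cst m p e) * (∫⁻ r in Set.Ioo (dist x y) (2 * dist x y), W r) ∂μ)
      = (2 * Cst m p e) * ∫⁻ y in A, (∫⁻ r,
          (Set.Ioo (dist x y) (2 * dist x y)).indicator W r) ∂μ := by
    rw [lintegral_const_mul' _ _ hC2t]
    congr 1
    exact lintegral_congr fun y => (lintegral_indicator measurableSet_Ioo _).symm
  have hswap : (∫⁻ y in A, (∫⁻ r,
        (Set.Ioo (dist x y) (2 * dist x y)).indicator W r) ∂μ)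
      = ∫⁻ r, (∫⁻ y in A, (Set.Ioo (dist x y) (2 * dist x y)).indicator W r ∂μ) := by
    apply lintegral_lintegral_swap
    have hdm : Measurable fun q : Euc n × ℝ => dist x q.1 := measurable_const.dist measurable_fst
    have hTm : MeasurableSet {q : Euc n × ℝ | dist x q.1 < q.2 ∧ q.2 < 2 * dist x q.1} :=
      (measurableSet_lt hdm measurable_snd).inter
        (measurableSet_lt measurable_snd (hdm.const_mul 2))
    have heq : (Function.uncurry fun (y : Euc n) (r : ℝ) =>
          (Set.Ioo (dist x y) (2 * dist x y)).indicator W r)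
        = Set.indicator {q : Euc n × ℝ | dist x q.1 < q.2 ∧ q.2 < 2 * dist x q.1}
            (fun q => W q.2) := by
      funext q
      rcases q with ⟨y, r⟩
      by_cases hq : dist x y < r ∧ r < 2 * dist x y
      · simp [Function.uncurry, Set.indicator_apply, Set.mem_Ioo, hq]
      · simp [Function.uncurry, Set.indicator_apply, Set.mem_Ioo, hq]
    rw [heq]
    exact ((hWm.comp measurable_snd).indicator hTm).aemeasurable
  -- compute the inner integral and bound it
  have h3 : ∀ r : ℝ, (∫⁻ y in A, (Set.Ioo (dist x y) (2 * dist x y)).indicator W r ∂μ)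
      ≤ (IooE (2 * R)).indicator (fun r => W r * μ (closedBall x r)) r := by
    intro r
    have heq : (∫⁻ y in A, (Set.Ioo (dist x y) (2 * dist x y)).indicator W r ∂μ)
        = W r * (μ.restrict A) {y : Euc n | dist x y < r ∧ r < 2 * dist x y} := by
      rw [← lintegral_indicator_const (hSrm r)]
      exact lintegral_congr fun y => by
        by_cases hq : dist x y < r ∧ r < 2 * dist x y <;>
          simp [Set.indicator_apply, Set.mem_Ioo, hq]
    rw [heq, Measure.restrict_apply (hSrm r)]
    by_cases hmem : r ∈ IooE (2 * R)
    · rw [Set.indicator_of_mem hmem]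
      refine mul_le_mul_right (measure_mono fun y hy => ?_) _
      have : dist x y < r := hy.1.1
      exact Metric.mem_closedBall.2 (by rw [dist_comm]; exact this.le)
    · rw [Set.indicator_of_notMem hmem]
      have hempty : {y : Euc n | dist x y < r ∧ r < 2 * dist x y} ∩ A = ∅ := by
        ext y
        simp only [Set.mem_inter_iff, Set.mem_empty_iff_false, iff_false, not_and]
        rintro ⟨hy1, hy2⟩ hyA
        exfalso
        apply hmem
        rcases hyA with ⟨hyR, hyx⟩
        have hyx' : y ≠ x := by simpa using hyx
        have hdy : 0 < dist x y := dist_pos.2 (Ne.symm hyx')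
        constructor
        · exact lt_of_le_of_lt dist_nonneg hy1
        · have hedist : ENNReal.ofReal (dist x y) ≤ R := by
            have := hyR
            change edist y x ≤ R at this
            rw [edist_dist] at this
            rwa [dist_comm]
          calc ENNReal.ofReal r < ENNReal.ofReal (2 * dist x y) :=
                (ENNReal.ofReal_lt_ofReal_iff (by positivity)).2 hy2
            _ = 2 * ENNReal.ofReal (dist x y) := ofReal_two_mul _ dist_nonneg
            _ ≤ 2 * R := mul_le_mul_right hedist 2
      rw [hempty, measure_empty, mul_zero]
  -- final computation on `IooE (2 * R)`
  have h4 : (∫⁻ r, (IooE (2 * R)).indicator (fun r => W r * μ (closedBall x r)) r ∂(volume))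
      = ∫⁻ r in IooE (2 * R), W r * μ (closedBall x r) ∂(volume) :=
    lintegral_indicator hIooE _
  have h5 : (∫⁻ r in IooE (2 * R), W r * μ (closedBall x r) ∂(volume))
      ≤ ballVol m * ∫⁻ r in IooE (2 * R),
          theta μ m x r ^ m * betaInfC μ m p x r ^ p / ENNReal.ofReal (r ^ (α * p)) *
            ENNReal.ofReal (1 / r) ∂(volume) := by
    rw [← lintegral_const_mul' _ _ (ballVol_ne_top m)]
    refine setLIntegral_mono' hIooE fun r hr => ?_
    exact (stepF μ hm hp hα0 x hr.1).le
  calc (∫⁻ y in A,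
      theta μ m x (dist x y) ^ (m - 1) * betaInfC μ m p x (dist x y) ^ p /
        ENNReal.ofReal (dist x y ^ e) ∂μ)
      ≤ (2 * Cst m p e) * ∫⁻ y in A, (∫⁻ r,
          (Set.Ioo (dist x y) (2 * dist x y)).indicator W r) ∂μ := h2 ▸ h1
    _ = (2 * Cst m p e) * ∫⁻ r, (∫⁻ y in A,
          (Set.Ioo (dist x y) (2 * dist x y)).indicator W r ∂μ) := by rw [hswap]
    _ ≤ (2 * Cst m p e) *
          ∫⁻ r, (IooE (2 * R)).indicator (fun r => W r * μ (closedBall x r)) r ∂(volume) :=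
        mul_le_mul_right (lintegral_mono h3) _
    _ = (2 * Cst m p e) * ∫⁻ r in IooE (2 * R), W r * μ (closedBall x r) ∂(volume) := by
        rw [h4]
    _ ≤ (2 * Cst m p e) * (ballVol m * ∫⁻ r in IooE (2 * R),
          theta μ m x r ^ m * betaInfC μ m p x r ^ p / ENNReal.ofReal (r ^ (α * p)) *
            ENNReal.ofReal (1 / r) ∂(volume)) := mul_le_mul_right h5 _
    _ = (2 * Cst m p e * ballVol m) * ∫⁻ r in IooE (2 * R),
          theta μ m x r ^ m * betaInfC μ m p x r ^ p / ENNReal.ofReal (r ^ (α * p)) *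
            ENNReal.ofReal (1 / r) ∂(volume) := by ring
end
end

section
/- Let 0 < m < n be integers, α ∈ [0,1], p ∈ [1,∞). There exists a constant Γ = Γ(m,p,α) ∈ (0,∞) with the following property. Let μ be a Radon measure on ℝⁿ, x ∈ ℝⁿ, R ∈ (0,∞), and for each k ∈ ℕ let L_k ∈ A(n,m) be a plane with x ∈ L_k and β_{μ,p}(x,2^{−k}R,L_k) = β̊_{μ,p}(x,2^{−k}R). Define T(y) = L_k for y with 2^{−k−1}R < |y−x| ≤ 2^{−k}R. Then ∫_{B̄(x,R)∖{x}} Θ^m(μ,x,|x−y|)^m · dist(y,T(y))^p / |x−y|^{m+(1+α)p} dμ(y) ≤ Γ · ∫₀^{2R} Θ^m(μ,x,r)^m · β̊_{μ,p}(x,r)^p / r^{αp} · dr/r. -/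
open MeasureTheory Metric Set
open scoped ENNReal NNReal

noncomputable section

section H
variable {n : ℕ}

lemma ballVol_pos (m : ℕ) : 0 < ballVol m :=
  measure_closedBall_pos volume (0 : Euc m) one_pos

lemma theta_ne_top (μ : Measure (Euc n)) [IsLocallyFiniteMeasure μ] (m : ℕ) (x : Euc n)
    {r : ℝ} (hr : 0 < r) : theta μ m x r ≠ ∞ := by
  unfold theta
  apply (ENNReal.div_lt_top ?_ ?_).ne
  · exact (isCompact_closedBall x r).measure_lt_top.ne
  · exact mul_ne_zero (ballVol_pos m).ne' (pow_ne_zero _ (by simp [hr]))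

lemma theta_le_mul (μ : Measure (Euc n)) (m : ℕ) (x : Euc n) {s t : ℝ}
    (hs : 0 < s) (hst : s ≤ t) (ht : t ≤ 2 * s) :
    theta μ m x s ≤ 2 ^ m * theta μ m x t := by
  have h2 : ballVol m * ENNReal.ofReal t ^ m ≤ 2 ^ m * (ballVol m * ENNReal.ofReal s ^ m) := by
    have hot : ENNReal.ofReal t ≤ 2 * ENNReal.ofReal s := by
      rw [← ENNReal.ofReal_ofNat, ← ENNReal.ofReal_mul (by norm_num)]
      exact ENNReal.ofReal_le_ofReal ht
    calc ballVol m * ENNReal.ofReal t ^ m ≤ ballVol m * (2 * ENNReal.ofReal s) ^ m := by gcongr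
      _ = 2 ^ m * (ballVol m * ENNReal.ofReal s ^ m) := by ring
  calc theta μ m x s
      = 2 ^ m * μ (closedBall x s) / (2 ^ m * (ballVol m * ENNReal.ofReal s ^ m)) := by
        rw [ENNReal.mul_div_mul_left _ _ (pow_ne_zero _ two_ne_zero)
          (ENNReal.pow_ne_top ENNReal.ofNat_ne_top)]
        rfl
    _ ≤ 2 ^ m * μ (closedBall x t) / (ballVol m * ENNReal.ofReal t ^ m) := by
        exact ENNReal.div_le_div
          (mul_le_mul_right (measure_mono (closedBall_subset_closedBall hst)) _) h2
    _ = 2 ^ m * theta μ m x t := by rw [theta, mul_div_assoc]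
end H

section H2
variable {n : ℕ}

lemma betaL_rpow (μ : Measure (Euc n)) (m : ℕ) {p : ℝ} (hp : 0 < p) (x : Euc n) (r : ℝ)
    (L : Set (Euc n)) :
    betaL μ m p x r L ^ p = ((ENNReal.ofReal r) ^ p)⁻¹ *
      ((ENNReal.ofReal r ^ m)⁻¹ *
        ∫⁻ y in closedBall x r, ENNReal.ofReal (infDist y L ^ p) ∂μ) := by
  rw [betaL, ENNReal.mul_rpow_of_nonneg _ _ hp.le, ← ENNReal.rpow_mul, one_div,
    inv_mul_cancel₀ hp.ne', ENNReal.rpow_one, ENNReal.inv_rpow]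

lemma betaL_le_mul (μ : Measure (Euc n)) (m : ℕ) {p : ℝ} (hp : 1 ≤ p) (x : Euc n)
    {s t : ℝ} (hs : 0 < s) (hst : s ≤ t) (ht : t ≤ 2 * s) (L : Set (Euc n)) :
    betaL μ m p x s L ≤ 2 ^ (m + 1) * betaL μ m p x t L := by
  have hp0 : 0 < p := lt_of_lt_of_le one_pos hp
  have hot : ENNReal.ofReal t ≤ 2 * ENNReal.ofReal s := by
    rw [← ENNReal.ofReal_ofNat, ← ENNReal.ofReal_mul (by norm_num)]
    exact ENNReal.ofReal_le_ofReal ht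
  have hinv1 : (ENNReal.ofReal s)⁻¹ ≤ 2 * (ENNReal.ofReal t)⁻¹ := by
    calc (ENNReal.ofReal s)⁻¹
        = 2 * (2⁻¹ * (ENNReal.ofReal s)⁻¹) := by
          rw [← mul_assoc, ENNReal.mul_inv_cancel two_ne_zero ENNReal.ofNat_ne_top, one_mul]
      _ = 2 * (2 * ENNReal.ofReal s)⁻¹ := by
          rw [ENNReal.mul_inv (Or.inl two_ne_zero) (Or.inl ENNReal.ofNat_ne_top)]
      _ ≤ 2 * (ENNReal.ofReal t)⁻¹ := by
          exact mul_le_mul_right (ENNReal.inv_le_inv.mpr hot) 2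
  have hinvm : (ENNReal.ofReal s ^ m)⁻¹ ≤ 2 ^ m * (ENNReal.ofReal t ^ m)⁻¹ := by
    calc (ENNReal.ofReal s ^ m)⁻¹ = ((ENNReal.ofReal s)⁻¹) ^ m := by rw [ENNReal.inv_pow]
      _ ≤ (2 * (ENNReal.ofReal t)⁻¹) ^ m := by gcongr
      _ = 2 ^ m * (ENNReal.ofReal t ^ m)⁻¹ := by rw [mul_pow, ← ENNReal.inv_pow]
  have hI : (∫⁻ y in closedBall x s, ENNReal.ofReal (infDist y L ^ p) ∂μ) ≤
      ∫⁻ y in closedBall x t, ENNReal.ofReal (infDist y L ^ p) ∂μ :=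
    lintegral_mono' (Measure.restrict_mono (closedBall_subset_closedBall hst) le_rfl) le_rfl
  have h2m : ((2 : ℝ≥0∞) ^ m) ^ (1 / p) ≤ 2 ^ m := by
    rw [← ENNReal.rpow_natCast 2 m, ← ENNReal.rpow_mul]
    refine ENNReal.rpow_le_rpow_of_exponent_le one_le_two ?_
    rw [mul_one_div]
    exact div_le_self (Nat.cast_nonneg m) hp
  calc betaL μ m p x s L
      ≤ (2 * (ENNReal.ofReal t)⁻¹) *
          ((2 ^ m * (ENNReal.ofReal t ^ m)⁻¹) *
            ∫⁻ y in closedBall x t, ENNReal.ofReal (infDist y L ^ p) ∂μ) ^ (1 / p) := by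
        rw [betaL]
        exact mul_le_mul' hinv1
          (ENNReal.rpow_le_rpow (mul_le_mul' hinvm hI) (by positivity))
    _ = 2 * ((2:ℝ≥0∞) ^ m) ^ (1/p) * ((ENNReal.ofReal t)⁻¹ *
          ((ENNReal.ofReal t ^ m)⁻¹ *
            ∫⁻ y in closedBall x t, ENNReal.ofReal (infDist y L ^ p) ∂μ) ^ (1 / p)) := by
        rw [mul_assoc (2 ^ m), ENNReal.mul_rpow_of_nonneg _ _ (by positivity)]
        ring
    _ ≤ 2 * 2 ^ m * ((ENNReal.ofReal t)⁻¹ *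
          ((ENNReal.ofReal t ^ m)⁻¹ *
            ∫⁻ y in closedBall x t, ENNReal.ofReal (infDist y L ^ p) ∂μ) ^ (1 / p)) := by
        gcongr
    _ = 2 ^ (m + 1) * betaL μ m p x t L := by rw [betaL, pow_succ]; ring

lemma betaInfC_le_mul (μ : Measure (Euc n)) (m : ℕ) {p : ℝ} (hp : 1 ≤ p) (x : Euc n)
    {s t : ℝ} (hs : 0 < s) (hst : s ≤ t) (ht : t ≤ 2 * s) :
    betaInfC μ m p x s ≤ 2 ^ (m + 1) * betaInfC μ m p x t := by
  have h2 : ((2 : ℝ≥0∞) ^ (m + 1)) ≠ 0 := pow_ne_zero _ two_ne_zero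
  have h2' : ((2 : ℝ≥0∞) ^ (m + 1)) ≠ ∞ := ENNReal.pow_ne_top ENNReal.ofNat_ne_top
  have key : betaInfC μ m p x s / 2 ^ (m + 1) ≤ betaInfC μ m p x t := by
    refine le_iInf₂ fun L hL => ?_
    rw [ENNReal.div_le_iff_le_mul (Or.inl h2) (Or.inl h2')]
    calc betaInfC μ m p x s ≤ betaL μ m p x s L := iInf₂_le L hL
      _ ≤ 2 ^ (m + 1) * betaL μ m p x t L := betaL_le_mul μ m hp x hs hst ht L
      _ = betaL μ m p x t L * 2 ^ (m + 1) := mul_comm _ _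
  calc betaInfC μ m p x s = betaInfC μ m p x s / 2 ^ (m + 1) * 2 ^ (m + 1) :=
        (ENNReal.div_mul_cancel h2 h2').symm
    _ ≤ betaInfC μ m p x t * 2 ^ (m + 1) := by gcongr
    _ = 2 ^ (m + 1) * betaInfC μ m p x t := mul_comm _ _
end H2

section H3

lemma aux_inv_mul_le {a b c : ℝ≥0∞} (hc : c ≠ 0) (hc' : c ≠ ∞) (h : a ≤ c * b) :
    c⁻¹ * a ≤ b := by
  calc c⁻¹ * a ≤ c⁻¹ * (c * b) := mul_le_mul_right h _
    _ = b := by rw [← mul_assoc, ENNReal.inv_mul_cancel hc hc', one_mul]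

lemma ofReal_rpow_add (s : ℝ) (hs : 0 < s) (u v : ℝ) :
    (ENNReal.ofReal s) ^ (u + v) = (ENNReal.ofReal s) ^ u * (ENNReal.ofReal s) ^ v :=
  ENNReal.rpow_add u v (by simp [hs]) ENNReal.ofReal_ne_top

lemma pow_juggle {s p α : ℝ} (hs : 0 < s) (m : ℕ) :
    (ENNReal.ofReal ((s / 2) ^ ((m : ℝ) + (1 + α) * p)))⁻¹ *
        (ENNReal.ofReal s) ^ p * (ENNReal.ofReal s) ^ m =
      (2 : ℝ≥0∞) ^ ((m : ℝ) + (1 + α) * p) * (ENNReal.ofReal (s ^ (α * p)))⁻¹ := by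
  set E : ℝ := (m : ℝ) + (1 + α) * p with hE
  set os := ENNReal.ofReal s with hos
  have hos0 : os ≠ 0 := by simp [hos, hs]
  have host : os ≠ ∞ := ENNReal.ofReal_ne_top
  have h1 : ENNReal.ofReal ((s / 2) ^ E) = (os * 2⁻¹) ^ E := by
    rw [← ENNReal.ofReal_rpow_of_pos (by positivity)]
    congr 1
    rw [div_eq_mul_inv, ENNReal.ofReal_mul hs.le, ENNReal.ofReal_inv_of_pos two_pos]
    norm_num
    rfl
  have h2 : ((os * 2⁻¹) ^ E)⁻¹ = os ^ (-E) * (2 : ℝ≥0∞) ^ E := by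
    rw [← ENNReal.rpow_neg, ENNReal.mul_rpow_of_ne_zero hos0 (by norm_num),
      ENNReal.inv_rpow, ← ENNReal.rpow_neg, neg_neg]
  have h3 : (ENNReal.ofReal (s ^ (α * p)))⁻¹ = os ^ (-(α * p)) := by
    rw [← ENNReal.ofReal_rpow_of_pos hs, ← ENNReal.rpow_neg]
  rw [h1, h2, h3, ← ENNReal.rpow_natCast os m]
  rw [mul_assoc, mul_comm ((2:ℝ≥0∞) ^ E), mul_assoc, ← ofReal_rpow_add s hs,
    ← mul_assoc, mul_comm (os ^ (-E)), mul_assoc, ← ofReal_rpow_add s hs]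
  rw [mul_comm]
  congr 1
  rw [hE]
  ring
  rfl

lemma mem_annuli {R d : ℝ} (hR : 0 < R) (hd : 0 < d) (hdR : d ≤ R) :
    ∃ k : ℕ, (2 : ℝ) ^ (-(k : ℤ)) * R / 2 < d ∧ d ≤ 2 ^ (-(k : ℤ)) * R := by
  have hex : ∃ j : ℕ, (2 : ℝ) ^ (-(j : ℤ)) * R < d := by
    obtain ⟨j, hj⟩ := exists_pow_lt_of_lt_one (div_pos hd hR) (by norm_num : (1 : ℝ) / 2 < 1)
    refine ⟨j, ?_⟩
    have h2j : (2 : ℝ) ^ (-(j : ℤ)) = (1 / 2) ^ j := by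
      rw [zpow_neg, zpow_natCast, one_div, inv_pow]
    rw [h2j]
    calc (1 / 2 : ℝ) ^ j * R < d / R * R := mul_lt_mul_of_pos_right hj hR
      _ = d := div_mul_cancel₀ d hR.ne'
  classical
  have hk0 : (2 : ℝ) ^ (-(Nat.find hex : ℤ)) * R < d := Nat.find_spec hex
  have hk0pos : Nat.find hex ≠ 0 := by
    intro h0
    rw [h0] at hk0
    norm_num at hk0
    linarith
  obtain ⟨k, hk⟩ : ∃ k, Nat.find hex = k + 1 :=
    ⟨Nat.find hex - 1, (Nat.succ_pred_eq_of_pos (Nat.pos_of_ne_zero hk0pos)).symm⟩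
  have hnot : ¬ ((2 : ℝ) ^ (-(k : ℤ)) * R < d) := by
    have := Nat.find_min hex (m := k) (by omega)
    exact this
  rw [hk] at hk0
  have heq : (2 : ℝ) ^ (-((k + 1 : ℕ) : ℤ)) * R = 2 ^ (-(k : ℤ)) * R / 2 := by
    have : (-((k + 1 : ℕ) : ℤ)) = -(k : ℤ) - 1 := by push_cast; ring
    rw [this, zpow_sub₀ (two_ne_zero), zpow_one]
    ring
  rw [heq] at hk0
  exact ⟨k, hk0, not_lt.mp hnot⟩

end H3

/-- Estimate (snd-int): with `Γ = Γ(m,p,α)`, for optimal centred planes `L_k` at the dyadic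
scales `2^{-k}R` and `T(y) = L_k` on the corresponding annuli,
`∫_{B̄(x,R)∖{x}} Θ^m dist(y,T(y))^p |x−y|^{-m-(1+α)p} dμ(y) ≤ Γ ∫₀^{2R} Θ^m β̊^p r^{-αp} dr/r`. -/
theorem stmt10 (m : ℕ) (hm : 0 < m) (p α : ℝ) (hp : 1 ≤ p) (hα0 : 0 ≤ α) (hα1 : α ≤ 1) :
    ∃ Γ : ℝ≥0∞, 0 < Γ ∧ Γ ≠ ∞ ∧
      ∀ (n : ℕ), m < n → ∀ (μ : Measure (Euc n)) [IsLocallyFiniteMeasure μ],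
      ∀ (x : Euc n) (R : ℝ), 0 < R →
      ∀ (L : ℕ → AffineSubspace ℝ (Euc n)),
        (∀ k, L k ∈ affPlanes n m) → (∀ k, x ∈ L k) →
        (∀ k : ℕ, betaL μ m p x (2 ^ (-(k : ℤ)) * R) ((L k : Set (Euc n))) =
          betaInfC μ m p x (2 ^ (-(k : ℤ)) * R)) →
      ∀ (T : Euc n → AffineSubspace ℝ (Euc n)),
        (∀ (y : Euc n) (k : ℕ), 2 ^ (-(k : ℤ) - 1) * R < dist y x →
          dist y x ≤ 2 ^ (-(k : ℤ)) * R → T y = L k) →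
        (∫⁻ y in closedBall x R \ {x},
            theta μ m x (dist x y) ^ m *
              ENNReal.ofReal (infDist y ((T y : Set (Euc n))) ^ p) /
                ENNReal.ofReal (dist x y ^ ((m : ℝ) + (1 + α) * p)) ∂μ)
          ≤ Γ * ∫⁻ r in Set.Ioo (0 : ℝ) (2 * R),
              theta μ m x r ^ m * betaInfC μ m p x r ^ p / ENNReal.ofReal (r ^ (α * p)) *
                ENNReal.ofReal (1 / r) := by
  have hp0 : 0 < p := lt_of_lt_of_le one_pos hp
  have hαp : 0 ≤ α * p := mul_nonneg hα0 hp0.le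
  set E : ℝ := (m : ℝ) + (1 + α) * p with hE
  have hE0 : 0 ≤ E := by
    have h1 : 0 ≤ (1 + α) * p := mul_nonneg (by linarith) hp0.le
    have h2 : (0:ℝ) ≤ (m:ℝ) := Nat.cast_nonneg m
    rw [hE]; linarith
  set C₁ : ℝ≥0∞ := (2 : ℝ≥0∞) ^ (m * m) * (2 : ℝ≥0∞) ^ E with hC₁
  set c₀ : ℝ≥0∞ := ((2 : ℝ≥0∞) ^ (m * m))⁻¹ * (((2 : ℝ≥0∞) ^ (m + 1)) ^ p)⁻¹ *
    (ENNReal.ofReal ((2 : ℝ) ^ (α * p)))⁻¹ with hc₀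
  set c : ℝ≥0∞ := c₀ * 2⁻¹ with hc
  have h2mm0 : ((2 : ℝ≥0∞) ^ (m * m)) ≠ 0 := pow_ne_zero _ two_ne_zero
  have h2mmt : ((2 : ℝ≥0∞) ^ (m * m)) ≠ ∞ := ENNReal.pow_ne_top ENNReal.ofNat_ne_top
  have h2m1p0 : (((2 : ℝ≥0∞) ^ (m + 1)) ^ p) ≠ 0 :=
    (ENNReal.rpow_pos (pos_iff_ne_zero.mpr (pow_ne_zero _ two_ne_zero))
      (ENNReal.pow_ne_top ENNReal.ofNat_ne_top)).ne'
  have h2m1pt : (((2 : ℝ≥0∞) ^ (m + 1)) ^ p) ≠ ∞ :=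
    ENNReal.rpow_ne_top_of_nonneg hp0.le (ENNReal.pow_ne_top ENNReal.ofNat_ne_top)
  have hof2αp0 : (ENNReal.ofReal ((2 : ℝ) ^ (α * p))) ≠ 0 := by
    simp [Real.rpow_pos_of_pos two_pos]
  have hc00 : c₀ ≠ 0 := by
    rw [hc₀]
    exact mul_ne_zero (mul_ne_zero (ENNReal.inv_ne_zero.mpr h2mmt)
      (ENNReal.inv_ne_zero.mpr h2m1pt)) (ENNReal.inv_ne_zero.mpr ENNReal.ofReal_ne_top)
  have hc0t : c₀ ≠ ∞ := by
    rw [hc₀]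
    exact ENNReal.mul_ne_top (ENNReal.mul_ne_top (ENNReal.inv_ne_top.mpr h2mm0)
      (ENNReal.inv_ne_top.mpr h2m1p0)) (ENNReal.inv_ne_top.mpr hof2αp0)
  have hcne0 : c ≠ 0 := by
    rw [hc]
    exact mul_ne_zero hc00 (ENNReal.inv_ne_zero.mpr ENNReal.ofNat_ne_top)
  have hcnet : c ≠ ∞ := by
    rw [hc]
    exact ENNReal.mul_ne_top hc0t (ENNReal.inv_ne_top.mpr two_ne_zero)
  have hC₁0 : C₁ ≠ 0 := by
    rw [hC₁]
    exact mul_ne_zero h2mm0 (ENNReal.rpow_pos two_pos ENNReal.ofNat_ne_top).ne'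
  have hC₁t : C₁ ≠ ∞ := by
    rw [hC₁]
    exact ENNReal.mul_ne_top h2mmt (ENNReal.rpow_ne_top_of_nonneg hE0 ENNReal.ofNat_ne_top)
  refine ⟨C₁ * c⁻¹, ?_, ?_, ?_⟩
  · exact pos_iff_ne_zero.mpr (mul_ne_zero hC₁0 (ENNReal.inv_ne_zero.mpr hcnet))
  · exact ENNReal.mul_ne_top hC₁t (ENNReal.inv_ne_top.mpr hcne0)
  intro n hmn μ _ x R hR L hLmem hLx hLopt T hT
  set rk : ℕ → ℝ := fun k => 2 ^ (-(k : ℤ)) * R with hrk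
  have hrkpos : ∀ k, 0 < rk k := fun k => mul_pos (zpow_pos two_pos _) hR
  have hrkR : ∀ k, rk k ≤ R := by
    intro k
    have h1 := zpow_le_one_of_nonpos₀ (one_le_two (α := ℝ)) (neg_nonpos.mpr (Int.ofNat_nonneg k))
    simp only [hrk]
    nlinarith
  set G : ℕ → ℝ≥0∞ := fun k => theta μ m x (rk k) ^ m * betaInfC μ m p x (rk k) ^ p *
    (ENNReal.ofReal ((rk k) ^ (α * p)))⁻¹ with hG
  set A : ℕ → Set (Euc n) := fun k => closedBall x (rk k) \ closedBall x (rk k / 2) with hA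
  set f : Euc n → ℝ≥0∞ := fun y => theta μ m x (dist x y) ^ m *
    ENNReal.ofReal (infDist y ((T y : Set (Euc n))) ^ p) /
      ENNReal.ofReal (dist x y ^ E) with hf
  -- covering
  have hcover : closedBall x R \ {x} ⊆ ⋃ k, A k := by
    rintro y ⟨hy1, hy2⟩
    have hd : 0 < dist y x := dist_pos.mpr (by simpa using hy2)
    obtain ⟨k, h1, h2⟩ := mem_annuli hR hd (mem_closedBall.mp hy1)
    refine mem_iUnion.mpr ⟨k, mem_closedBall.mpr h2, fun hc => ?_⟩
    exact absurd (mem_closedBall.mp hc) (not_le.mpr h1)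
  have hLHS : (∫⁻ y in closedBall x R \ {x}, f y ∂μ) ≤ ∑' k, ∫⁻ y in A k, f y ∂μ :=
    le_trans (lintegral_mono' (Measure.restrict_mono hcover le_rfl) le_rfl)
      (lintegral_iUnion_le A f)
  -- per-annulus upper bound
  have hAk : ∀ k, (∫⁻ y in A k, f y ∂μ) ≤ C₁ * G k := by
    intro k
    have hs0 : 0 < rk k := hrkpos k
    set s : ℝ := rk k with hs
    set os : ℝ≥0∞ := ENNReal.ofReal s with hosdef
    have hos0 : os ≠ 0 := by simp [hosdef, hs0]
    have host : os ≠ ∞ := ENNReal.ofReal_ne_top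
    set ck : ℝ≥0∞ := (2 ^ m * theta μ m x s) ^ m * (ENNReal.ofReal ((s / 2) ^ E))⁻¹ with hck
    have hcktop : ck ≠ ∞ := by
      rw [hck]
      refine ENNReal.mul_ne_top (ENNReal.pow_ne_top (ENNReal.mul_ne_top
        (ENNReal.pow_ne_top ENNReal.ofNat_ne_top) (theta_ne_top μ m x hs0)))
        (ENNReal.inv_ne_top.mpr ?_)
      simp [Real.rpow_pos_of_pos (half_pos hs0)]
    have hpt : ∀ y ∈ A k, f y ≤ ck * ENNReal.ofReal (infDist y ((L k : Set (Euc n))) ^ p) := by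
      intro y hy
      obtain ⟨hy1, hy2⟩ := hy
      have hd1 : dist y x ≤ s := mem_closedBall.mp hy1
      have hd2 : s / 2 < dist y x := not_le.mp (fun h => hy2 (mem_closedBall.mpr h))
      have hd0 : 0 < dist y x := lt_of_lt_of_le (half_pos hs0) hd2.le
      have hTy : T y = L k := by
        refine hT y k ?_ hd1
        have heq : (2 : ℝ) ^ (-(k : ℤ) - 1) * R = s / 2 := by
          rw [hs, hrk, zpow_sub₀ (two_ne_zero), zpow_one]
          ring
        rw [heq]
        exact hd2
      have hθ : theta μ m x (dist x y) ^ m ≤ (2 ^ m * theta μ m x s) ^ m := by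
        gcongr
        rw [dist_comm]
        exact theta_le_mul μ m x hd0 hd1 (by linarith)
      have hden : (ENNReal.ofReal (dist x y ^ E))⁻¹ ≤ (ENNReal.ofReal ((s / 2) ^ E))⁻¹ := by
        apply ENNReal.inv_le_inv.mpr
        apply ENNReal.ofReal_le_ofReal
        rw [dist_comm]
        exact Real.rpow_le_rpow (by positivity) hd2.le hE0
      calc f y = theta μ m x (dist x y) ^ m *
            ENNReal.ofReal (infDist y ((T y : Set (Euc n))) ^ p) *
              (ENNReal.ofReal (dist x y ^ E))⁻¹ := by simp only [hf, div_eq_mul_inv]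
        _ ≤ (2 ^ m * theta μ m x s) ^ m *
            ENNReal.ofReal (infDist y ((L k : Set (Euc n))) ^ p) *
              (ENNReal.ofReal ((s / 2) ^ E))⁻¹ := by
            rw [hTy]
            exact mul_le_mul' (mul_le_mul' hθ le_rfl) hden
        _ = ck * ENNReal.ofReal (infDist y ((L k : Set (Euc n))) ^ p) := by rw [hck]; ring
    have hAmeas : MeasurableSet (A k) := measurableSet_closedBall.diff measurableSet_closedBall
    have hI : (∫⁻ y in closedBall x s, ENNReal.ofReal (infDist y ((L k : Set (Euc n))) ^ p) ∂μ)
        = betaL μ m p x s ((L k : Set (Euc n))) ^ p * os ^ p * os ^ m := by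
      rw [betaL_rpow μ m hp0 x s _]
      have h1 : (os ^ p) ≠ 0 := (ENNReal.rpow_pos (pos_iff_ne_zero.mpr hos0) host).ne'
      have h2 : (os ^ p) ≠ ∞ := ENNReal.rpow_ne_top_of_nonneg hp0.le host
      have h3 : ((os : ℝ≥0∞) ^ m) ≠ 0 := pow_ne_zero _ hos0
      have h4 : ((os : ℝ≥0∞) ^ m) ≠ ∞ := ENNReal.pow_ne_top host
      set I := ∫⁻ y in closedBall x s, ENNReal.ofReal (infDist y ((L k : Set (Euc n))) ^ p) ∂μ
      calc I = I * ((os ^ p)⁻¹ * os ^ p) * ((os ^ m)⁻¹ * os ^ m) := by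
            rw [ENNReal.inv_mul_cancel h1 h2, ENNReal.inv_mul_cancel h3 h4, mul_one, mul_one]
        _ = (os ^ p)⁻¹ * ((os ^ m)⁻¹ * I) * os ^ p * os ^ m := by ring
    have hPJ := pow_juggle (p := p) (α := α) hs0 m
    rw [← hE] at hPJ
    calc (∫⁻ y in A k, f y ∂μ)
        ≤ ∫⁻ y in A k, ck * ENNReal.ofReal (infDist y ((L k : Set (Euc n))) ^ p) ∂μ :=
          setLIntegral_mono' hAmeas hpt
      _ ≤ ∫⁻ y in closedBall x s, ck *
            ENNReal.ofReal (infDist y ((L k : Set (Euc n))) ^ p) ∂μ :=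
          lintegral_mono' (Measure.restrict_mono diff_subset le_rfl) le_rfl
      _ = ck * ∫⁻ y in closedBall x s,
            ENNReal.ofReal (infDist y ((L k : Set (Euc n))) ^ p) ∂μ :=
          lintegral_const_mul' _ _ hcktop
      _ = ck * (betaL μ m p x s ((L k : Set (Euc n))) ^ p * os ^ p * os ^ m) := by rw [hI]
      _ = (2 ^ m * theta μ m x s) ^ m * betaL μ m p x s ((L k : Set (Euc n))) ^ p *
            ((ENNReal.ofReal ((s / 2) ^ E))⁻¹ * os ^ p * os ^ m) := by rw [hck]; ring
      _ = (2 ^ m * theta μ m x s) ^ m * betaL μ m p x s ((L k : Set (Euc n))) ^ p *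
            ((2 : ℝ≥0∞) ^ E * (ENNReal.ofReal (s ^ (α * p)))⁻¹) := by rw [hPJ]
      _ = C₁ * G k := by
          rw [hC₁, hG, hLopt k, hs]
          ring
  -- RHS: dyadic intervals
  set g : ℝ → ℝ≥0∞ := fun r => theta μ m x r ^ m * betaInfC μ m p x r ^ p /
    ENNReal.ofReal (r ^ (α * p)) * ENNReal.ofReal (1 / r) with hg
  set Ik : ℕ → Set ℝ := fun k => Ico (rk k) (2 * rk k) with hIk
  have hIksub : (⋃ k, Ik k) ⊆ Set.Ioo 0 (2 * R) := by
    rintro r hr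
    obtain ⟨k, h1, h2⟩ := mem_iUnion.mp hr
    exact ⟨lt_of_lt_of_le (hrkpos k) h1, lt_of_lt_of_le h2 (by nlinarith [hrkR k, hrkpos k])⟩
  have hIkdisj : Pairwise (Function.onFun Disjoint Ik) := by
    have key : ∀ i j : ℕ, i < j → Disjoint (Ik i) (Ik j) := by
      intro i j hij
      refine Set.Ico_disjoint_Ico.mpr (le_trans (min_le_right _ _) (le_trans ?_ (le_max_left _ _)))
      have hz : (2 : ℝ) ^ (-(j : ℤ)) ≤ 2 ^ (-(i : ℤ) - 1) := by
        apply zpow_le_zpow_right₀ one_le_two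
        omega
      have : (2 : ℝ) ^ (-(i : ℤ) - 1) = 2 ^ (-(i : ℤ)) / 2 := by
        rw [zpow_sub₀ (two_ne_zero), zpow_one]
      simp only [hIk, hrk]
      nlinarith [hrkpos i]
    intro i j hij
    rcases hij.lt_or_gt with h | h
    · exact key i j h
    · exact (key j i h).symm
  have hRHSsum : ∑' k, ∫⁻ r in Ik k, g r ≤ ∫⁻ r in Set.Ioo 0 (2 * R), g r := by
    rw [← lintegral_iUnion (fun k => measurableSet_Ico) hIkdisj]
    exact lintegral_mono' (Measure.restrict_mono hIksub le_rfl) le_rfl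
  -- per-interval lower bound
  have hIkk : ∀ k, c * G k ≤ ∫⁻ r in Ik k, g r := by
    intro k
    have hs0 : 0 < rk k := hrkpos k
    set s : ℝ := rk k with hs
    have hpt : ∀ r ∈ Set.Ico s (2 * s),
        c₀ * G k * ENNReal.ofReal (1 / (2 * s)) ≤ g r := by
      intro r hr
      obtain ⟨hsr, hr2⟩ := hr
      have hr0 : 0 < r := lt_of_lt_of_le hs0 hsr
      have b1 : ((2 : ℝ≥0∞) ^ (m * m))⁻¹ * theta μ m x s ^ m ≤ theta μ m x r ^ m := by
        refine aux_inv_mul_le h2mm0 h2mmt ?_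
        calc theta μ m x s ^ m ≤ (2 ^ m * theta μ m x r) ^ m := by
              gcongr
              exact theta_le_mul μ m x hs0 hsr hr2.le
          _ = 2 ^ (m * m) * theta μ m x r ^ m := by rw [mul_pow, ← pow_mul]
      have b2 : (((2 : ℝ≥0∞) ^ (m + 1)) ^ p)⁻¹ * betaInfC μ m p x s ^ p ≤
          betaInfC μ m p x r ^ p := by
        refine aux_inv_mul_le h2m1p0 h2m1pt ?_
        calc betaInfC μ m p x s ^ p ≤ (2 ^ (m + 1) * betaInfC μ m p x r) ^ p :=
              ENNReal.rpow_le_rpow (betaInfC_le_mul μ m hp x hs0 hsr hr2.le) hp0.le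
          _ = (2 ^ (m + 1)) ^ p * betaInfC μ m p x r ^ p :=
              ENNReal.mul_rpow_of_nonneg _ _ hp0.le
      have b3 : (ENNReal.ofReal ((2 : ℝ) ^ (α * p)))⁻¹ * (ENNReal.ofReal (s ^ (α * p)))⁻¹ ≤
          (ENNReal.ofReal (r ^ (α * p)))⁻¹ := by
        rw [← ENNReal.mul_inv (Or.inl hof2αp0) (Or.inr (by simp [Real.rpow_pos_of_pos hs0]))]
        apply ENNReal.inv_le_inv.mpr
        rw [← ENNReal.ofReal_mul (by positivity)]
        apply ENNReal.ofReal_le_ofReal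
        rw [← Real.mul_rpow (by norm_num) hs0.le]
        exact Real.rpow_le_rpow hr0.le hr2.le hαp
      have b4 : ENNReal.ofReal (1 / (2 * s)) ≤ ENNReal.ofReal (1 / r) :=
        ENNReal.ofReal_le_ofReal (one_div_le_one_div_of_le hr0 hr2.le)
      calc c₀ * G k * ENNReal.ofReal (1 / (2 * s))
          = (((2 : ℝ≥0∞) ^ (m * m))⁻¹ * theta μ m x s ^ m) *
              ((((2 : ℝ≥0∞) ^ (m + 1)) ^ p)⁻¹ * betaInfC μ m p x s ^ p) *
              ((ENNReal.ofReal ((2 : ℝ) ^ (α * p)))⁻¹ * (ENNReal.ofReal (s ^ (α * p)))⁻¹) *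
              ENNReal.ofReal (1 / (2 * s)) := by
            simp only [hc₀, hG, ← hs]
            ring
        _ ≤ theta μ m x r ^ m * betaInfC μ m p x r ^ p *
              (ENNReal.ofReal (r ^ (α * p)))⁻¹ * ENNReal.ofReal (1 / r) :=
            mul_le_mul' (mul_le_mul' (mul_le_mul' b1 b2) b3) b4
        _ = g r := by simp only [hg, div_eq_mul_inv]
    have hhalf : ENNReal.ofReal (1 / (2 * s)) * ENNReal.ofReal s = 2⁻¹ := by
      rw [← ENNReal.ofReal_mul (by positivity)]
      have : 1 / (2 * s) * s = 1 / 2 := by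
        field_simp
      rw [this, one_div, ENNReal.ofReal_inv_of_pos two_pos, ENNReal.ofReal_ofNat]
    calc c * G k = c₀ * G k * ENNReal.ofReal (1 / (2 * s)) * ENNReal.ofReal s := by
          rw [hc, mul_assoc, mul_assoc, ← hhalf]
          ring
      _ = c₀ * G k * ENNReal.ofReal (1 / (2 * s)) * volume (Set.Ico s (2 * s)) := by
          rw [Real.volume_Ico, show 2 * s - s = s from by ring]
      _ = ∫⁻ _ in Set.Ico s (2 * s), c₀ * G k * ENNReal.ofReal (1 / (2 * s)) :=
          (setLIntegral_const _ _).symm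
      _ ≤ ∫⁻ r in Ik k, g r := setLIntegral_mono' measurableSet_Ico hpt
  -- assemble
  calc (∫⁻ y in closedBall x R \ {x}, f y ∂μ)
      ≤ ∑' k, ∫⁻ y in A k, f y ∂μ := hLHS
    _ ≤ ∑' k, C₁ * G k := ENNReal.tsum_le_tsum hAk
    _ = C₁ * ∑' k, G k := ENNReal.tsum_mul_left
    _ = (C₁ * c⁻¹) * (c * ∑' k, G k) := by
        rw [show (C₁ * c⁻¹) * (c * ∑' k, G k) = C₁ * ((c⁻¹ * c) * ∑' k, G k) from by ring,
          ENNReal.inv_mul_cancel hcne0 hcnet, one_mul]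
    _ = (C₁ * c⁻¹) * ∑' k, c * G k := by rw [ENNReal.tsum_mul_left]
    _ ≤ (C₁ * c⁻¹) * ∑' k, ∫⁻ r in Ik k, g r :=
        mul_le_mul_right (ENNReal.tsum_le_tsum hIkk) _
    _ ≤ (C₁ * c⁻¹) * ∫⁻ r in Set.Ioo 0 (2 * R), g r := mul_le_mul_right hRHSsum _
end
end

section
/- Let μ be a Radon measure on ℝⁿ and let F ⊆ ℝⁿ be a compact set. For ε > 0 define G_ε = {x ∈ F : μ(Q ∩ F) ≥ ε·μ(Q) for every dyadic cube Q ∈ D with x ∈ Q and l(Q) ≤ ε}. Then μ(F ∖ ⋃_{ε>0} G_ε) = 0. -/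
open MeasureTheory Metric Set
open scoped ENNReal NNReal

noncomputable section

section GepsAux

lemma mem_dyadicCube_iff {n : ℕ} {k : ℤ} {a : Fin n → ℤ} {x : Euc n} :
    x ∈ dyadicCube k a ↔ ∀ i, ⌊x i * 2 ^ k⌋ = a i := by
  have h2 : (0:ℝ) < 2 ^ k := zpow_pos (by norm_num) _
  have ht : (2:ℝ) ^ (-k) * 2 ^ k = 1 := by
    rw [← zpow_add₀ (by norm_num : (2:ℝ) ≠ 0)]; simp
  simp only [dyadicCube, cube, dyadicCenter, Set.mem_setOf_eq, Set.mem_Ico]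
  refine forall_congr' fun i => ?_
  rw [Int.floor_eq_iff]
  have e1 : ((a i : ℝ) + 1 / 2) * 2 ^ (-k) - 2 ^ (-k) / 2 = (a i : ℝ) * 2 ^ (-k) := by ring
  have e2 : ((a i : ℝ) + 1 / 2) * 2 ^ (-k) + 2 ^ (-k) / 2 = ((a i : ℝ) + 1) * 2 ^ (-k) := by
    ring
  have key : ∀ b : ℝ, b * 2 ^ (-k) = b / 2 ^ k := fun b => by
    rw [zpow_neg, div_eq_mul_inv]
  rw [e1, e2, key, key, div_le_iff₀ h2, lt_div_iff₀ h2]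

lemma measurableSet_dyadicCube {n : ℕ} (k : ℤ) (a : Fin n → ℤ) :
    MeasurableSet (dyadicCube k a) := by
  have : dyadicCube k a = ⋂ i, (fun y : Euc n => y i) ⁻¹'
      Set.Ico (dyadicCenter k a i - 2^(-k)/2) (dyadicCenter k a i + 2^(-k)/2) := by
    ext y; simp [dyadicCube, cube]
  rw [this]
  exact MeasurableSet.iInter fun i =>
    measurableSet_Ico.preimage (((continuous_apply i).comp (PiLp.continuous_ofLp 2 _)).measurable)

lemma dist_le_of_mem_dyadicCube {n : ℕ} {k : ℤ} {a : Fin n → ℤ} {z w : Euc n}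
    (hz : z ∈ dyadicCube k a) (hw : w ∈ dyadicCube k a) :
    dist z w ≤ Real.sqrt n * 2 ^ (-k) := by
  have hti : (0:ℝ) < 2 ^ (-k) := zpow_pos (by norm_num) _
  have hb : ∀ i, dist (z i) (w i) ≤ 2 ^ (-k) := by
    intro i
    have h1 := hz i; have h2 := hw i
    simp only [Set.mem_Ico] at h1 h2
    rw [Real.dist_eq, abs_sub_le_iff]
    constructor <;> linarith [h1.1, h1.2, h2.1, h2.2]
  rw [EuclideanSpace.dist_eq]
  calc Real.sqrt (∑ i, dist (z i) (w i) ^ 2)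
      ≤ Real.sqrt (∑ _i : Fin n, ((2:ℝ)^(-k))^2) := by
        apply Real.sqrt_le_sqrt
        exact Finset.sum_le_sum fun i _ => pow_le_pow_left₀ dist_nonneg (hb i) 2
    _ = Real.sqrt ((n : ℝ) * ((2:ℝ)^(-k))^2) := by
        rw [Finset.sum_const, Finset.card_univ, Fintype.card_fin, nsmul_eq_mul]
    _ = Real.sqrt n * 2^(-k) := by
        rw [Real.sqrt_mul (Nat.cast_nonneg n), Real.sqrt_sq hti.le]

lemma intFloorDiv (t : ℝ) (m : ℕ) (hm : 0 < m) : ⌊t / (m : ℝ)⌋ = ⌊t⌋ / (m : ℤ) := by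
  have hm' : (0:ℝ) < m := by exact_mod_cast hm
  have hmz : (0:ℤ) < m := by exact_mod_cast hm
  rw [Int.floor_eq_iff]
  constructor
  · rw [le_div_iff₀ hm']
    have h1 : (⌊t⌋ / (m:ℤ)) * m ≤ ⌊t⌋ := Int.ediv_mul_le _ (by exact_mod_cast hm.ne')
    calc ((⌊t⌋ / (m:ℤ) : ℤ):ℝ) * m = (((⌊t⌋ / (m:ℤ)) * m : ℤ) : ℝ) := by push_cast; ring
      _ ≤ (⌊t⌋ : ℝ) := by exact_mod_cast h1
      _ ≤ t := Int.floor_le t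
  · rw [div_lt_iff₀ hm']
    have h2 : ⌊t⌋ < (⌊t⌋ / (m:ℤ) + 1) * m := Int.lt_ediv_add_one_mul_self _ hmz
    have h3 : (⌊t⌋:ℝ) + 1 ≤ (((⌊t⌋ / (m:ℤ) + 1) * m : ℤ) : ℝ) := by exact_mod_cast h2
    have h4 := Int.lt_floor_add_one t
    push_cast at h3 ⊢
    linarith

lemma dyadicCube_subset {n : ℕ} {k k' : ℤ} (hkk : k ≤ k') {a a' : Fin n → ℤ} {x : Euc n}
    (hx' : x ∈ dyadicCube k' a') (hx : x ∈ dyadicCube k a) :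
    dyadicCube k' a' ⊆ dyadicCube k a := by
  intro y hy
  rw [mem_dyadicCube_iff] at hx' hx hy ⊢
  intro i
  obtain ⟨d, rfl⟩ : ∃ d : ℕ, k' = k + d := ⟨(k' - k).toNat, by omega⟩
  have key : ∀ t : ℝ, ⌊t * 2 ^ k⌋ = ⌊t * 2 ^ (k + (d:ℤ))⌋ / ((2 ^ d : ℕ) : ℤ) := by
    intro t
    have he : t * 2 ^ k = t * 2 ^ (k + (d:ℤ)) / ((2 ^ d : ℕ) : ℝ) := by
      rw [zpow_add₀ (by norm_num : (2:ℝ) ≠ 0)]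
      push_cast
      rw [zpow_natCast]
      field_simp
    rw [he, intFloorDiv _ _ (pow_pos (by norm_num) d)]
  rw [← hx i, key (y i), key (x i)]
  have h1 : ⌊y i * 2 ^ (k + (d:ℤ))⌋ = ⌊x i * 2 ^ (k + (d:ℤ))⌋ := by rw [hy i, hx' i]
  rw [h1]

/-- coordinates of the dyadic cube at scale `m : ℕ` containing `x`. -/
def dyA {n : ℕ} (x : Euc n) (m : ℕ) : Fin n → ℤ := fun i => ⌊x i * 2 ^ (m : ℤ)⌋

lemma self_mem_dyA {n : ℕ} (x : Euc n) (m : ℕ) : x ∈ dyadicCube (m : ℤ) (dyA x m) :=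
  mem_dyadicCube_iff.2 fun _ => rfl

/-- `x` has a bad cube at scale `m`. -/
def badAt {n : ℕ} (μ : Measure (Euc n)) (F : Set (Euc n)) (ε : ℝ) (x : Euc n) (m : ℕ) : Prop :=
  (2:ℝ) ^ (-(m:ℤ)) ≤ ε ∧
    μ (dyadicCube (m:ℤ) (dyA x m) ∩ F) < ENNReal.ofReal ε * μ (dyadicCube (m:ℤ) (dyA x m))

open Classical in
/-- the first bad scale. -/
def kap {n : ℕ} (μ : Measure (Euc n)) (F : Set (Euc n)) (ε : ℝ) (x : Euc n) : ℕ :=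
  if h : ∃ m, badAt μ F ε x m then Nat.find h else 0

open Classical in
lemma kap_spec {n : ℕ} {μ : Measure (Euc n)} {F : Set (Euc n)} {ε : ℝ} {x : Euc n}
    (h : ∃ m, badAt μ F ε x m) : badAt μ F ε x (kap μ F ε x) := by
  rw [kap, dif_pos h]; exact Nat.find_spec h

open Classical in
lemma kap_min {n : ℕ} {μ : Measure (Euc n)} {F : Set (Euc n)} {ε : ℝ} {x : Euc n}
    {m : ℕ} (hm : badAt μ F ε x m) : kap μ F ε x ≤ m := by
  rw [kap, dif_pos ⟨m, hm⟩]; exact Nat.find_min' _ hm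

/-- (Geps-exhaust): for a compact `F`, μ-almost every point of `F` lies in some
`G_ε = {x ∈ F : μ(Q ∩ F) ≥ ε μ(Q)` for all dyadic `Q ∋ x` with `l(Q) ≤ ε}`. -/
theorem stmt13 (n : ℕ) (μ : Measure (Euc n)) [IsLocallyFiniteMeasure μ]
    (F : Set (Euc n)) (hF : IsCompact F) :
    μ (F \ ⋃ (ε : ℝ) (_ : 0 < ε),
        {x ∈ F | ∀ (k : ℤ) (a : Fin n → ℤ), x ∈ dyadicCube k a → (2 : ℝ) ^ (-k) ≤ ε →
          ENNReal.ofReal ε * μ (dyadicCube k a) ≤ μ (dyadicCube k a ∩ F)}) = 0 := by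
  classical
  set B := F \ ⋃ (ε : ℝ) (_ : 0 < ε),
      {x ∈ F | ∀ (k : ℤ) (a : Fin n → ℤ), x ∈ dyadicCube k a → (2 : ℝ) ^ (-k) ≤ ε →
        ENNReal.ofReal ε * μ (dyadicCube k a) ≤ μ (dyadicCube k a ∩ F)} with hBdef
  set N := Metric.cthickening (Real.sqrt n) F with hNdef
  have hNc : IsCompact N :=
    isCompact_of_isClosed_isBounded Metric.isClosed_cthickening hF.isBounded.cthickening
  have hC : μ N ≠ ⊤ := hNc.measure_lt_top.ne
  have key : ∀ ε : ℝ, 0 < ε → ε ≤ 1 → μ B ≤ ENNReal.ofReal ε * μ N := by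
    intro ε hε hε1
    have hmem : ∀ x ∈ B, ∃ m : ℕ, badAt μ F ε x m := by
      intro x hx
      have hxF : x ∈ F := hx.1
      have hxG := hx.2
      rw [Set.mem_iUnion₂] at hxG
      push_neg at hxG
      have h := hxG ε hε
      simp only [Set.mem_setOf_eq] at h
      push_neg at h
      obtain ⟨k, a, hk1, hk2, hk3⟩ := h hxF
      have hk0 : 0 ≤ k := by
        by_contra hcon
        push_neg at hcon
        have h1 : (1:ℝ) < 2 ^ (-k) := one_lt_zpow₀ (by norm_num) (by omega)
        linarith
      lift k to ℕ using hk0 with m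
      have ha : a = dyA x m := funext fun i => (mem_dyadicCube_iff.1 hk1 i).symm
      subst ha
      exact ⟨m, hk2, hk3⟩
    have hself : ∀ (x : Euc n) (m : ℕ), x ∈ dyadicCube (m:ℤ) (dyA x m) := self_mem_dyA
    set κ : Euc n → ℕ := kap μ F ε with hκ
    have hκP : ∀ x ∈ B, badAt μ F ε x (κ x) := fun x hx => kap_spec (hmem x hx)
    set M : Set (ℤ × (Fin n → ℤ)) :=
      {p | ∃ x, x ∈ B ∧ p = (((κ x : ℕ) : ℤ), dyA x (κ x))} with hM
    have claim : ∀ x ∈ B, ∀ y ∈ B, κ x ≤ κ y →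
        ∀ z, z ∈ dyadicCube (κ x : ℤ) (dyA x (κ x)) → z ∈ dyadicCube (κ y : ℤ) (dyA y (κ y)) →
        (κ x = κ y ∧ dyA x (κ x) = dyA y (κ y)) := by
      intro x hx y hy hle z hzx hzy
      have hsub : dyadicCube (κ y : ℤ) (dyA y (κ y)) ⊆ dyadicCube (κ x : ℤ) (dyA x (κ x)) :=
        dyadicCube_subset (by exact_mod_cast hle) hzy hzx
      have hyx : y ∈ dyadicCube (κ x : ℤ) (dyA x (κ x)) := hsub (hself y (κ y))
      have hkeq : dyA x (κ x) = dyA y (κ x) :=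
        funext fun i => ((mem_dyadicCube_iff.1 hyx i)).symm
      have hPy : badAt μ F ε y (κ x) := by
        refine ⟨(hκP x hx).1, ?_⟩
        show μ (dyadicCube ((κ x : ℕ) : ℤ) (dyA y (κ x)) ∩ F) < _
        rw [← hkeq]
        exact (hκP x hx).2
      have hkk : κ x = κ y := le_antisymm hle (kap_min hPy)
      refine ⟨hkk, ?_⟩
      rw [← hkk]
      exact hkeq
    have hdisj : M.PairwiseDisjoint (fun p => dyadicCube p.1 p.2) := by
      rintro p hp q hq hne
      obtain ⟨x, hx, rfl⟩ := hp
      obtain ⟨y, hy, rfl⟩ := hq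
      rw [Function.onFun, Set.disjoint_left]
      intro z hz1 hz2
      apply hne
      rcases le_total (κ x) (κ y) with h | h
      · obtain ⟨h1, h2⟩ := claim x hx y hy h z hz1 hz2
        simp only [Prod.mk.injEq]
        exact ⟨by exact_mod_cast h1, h2⟩
      · obtain ⟨h1, h2⟩ := claim y hy x hx h z hz2 hz1
        simp only [Prod.mk.injEq]
        exact ⟨by exact_mod_cast h1.symm, h2.symm⟩
    have hcover : B ⊆ ⋃ p ∈ M, (dyadicCube p.1 p.2 ∩ F) := by
      intro x hx
      exact Set.mem_biUnion ⟨x, hx, rfl⟩ ⟨hself x (κ x), hx.1⟩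
    have hbadp : ∀ p ∈ M,
        μ (dyadicCube p.1 p.2 ∩ F) ≤ ENNReal.ofReal ε * μ (dyadicCube p.1 p.2) := by
      rintro p ⟨x, hx, rfl⟩
      exact (hκP x hx).2.le
    have hsubN : ∀ p ∈ M, dyadicCube p.1 p.2 ⊆ N := by
      rintro p ⟨x, hx, rfl⟩ z hz
      have hd : dist z x ≤ Real.sqrt n * 2 ^ (-((κ x : ℕ) : ℤ)) :=
        dist_le_of_mem_dyadicCube hz (hself x (κ x))
      have hd2 : dist z x ≤ Real.sqrt n := by
        have h1 : (2:ℝ) ^ (-((κ x : ℕ) : ℤ)) ≤ ε := (hκP x hx).1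
        calc dist z x ≤ Real.sqrt n * 2 ^ (-((κ x : ℕ) : ℤ)) := hd
          _ ≤ Real.sqrt n * 1 :=
              mul_le_mul_of_nonneg_left (le_trans h1 hε1) (Real.sqrt_nonneg _)
          _ = Real.sqrt n := mul_one _
      exact Metric.mem_cthickening_of_dist_le z x _ F hx.1 hd2
    have hMc : M.Countable := M.to_countable
    calc μ B ≤ μ (⋃ p ∈ M, dyadicCube p.1 p.2 ∩ F) := measure_mono hcover
      _ ≤ ∑' p : M, μ (dyadicCube (p : ℤ × (Fin n → ℤ)).1 (p : ℤ × (Fin n → ℤ)).2 ∩ F) :=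
          measure_biUnion_le μ hMc _
      _ ≤ ∑' p : M, ENNReal.ofReal ε * μ (dyadicCube (p : ℤ × (Fin n → ℤ)).1 (p : ℤ × (Fin n → ℤ)).2) :=
          ENNReal.tsum_le_tsum fun p => hbadp p p.2
      _ = ENNReal.ofReal ε * ∑' p : M, μ (dyadicCube (p : ℤ × (Fin n → ℤ)).1 (p : ℤ × (Fin n → ℤ)).2) :=
          ENNReal.tsum_mul_left
      _ = ENNReal.ofReal ε * μ (⋃ p ∈ M, dyadicCube p.1 p.2) := by
          rw [measure_biUnion hMc hdisj fun p _ => measurableSet_dyadicCube p.1 p.2]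
      _ ≤ ENNReal.ofReal ε * μ N := by
          gcongr
          exact Set.iUnion₂_subset hsubN
  have h0 : Filter.Tendsto (fun ε : ℝ => ENNReal.ofReal ε * μ N)
      (nhdsWithin 0 (Set.Ioi 0)) (nhds 0) := by
    have h1 : Filter.Tendsto (fun ε : ℝ => ENNReal.ofReal ε)
        (nhdsWithin 0 (Set.Ioi 0)) (nhds 0) := by
      have h2 := (ENNReal.continuous_ofReal.tendsto 0).mono_left
        (nhdsWithin_le_nhds (s := Set.Ioi (0:ℝ)))
      simpa using h2
    simpa using ENNReal.Tendsto.mul_const h1 (Or.inr hC)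
  refine le_antisymm ?_ zero_le
  refine ge_of_tendsto h0 ?_
  filter_upwards [Ioc_mem_nhdsGT_of_mem (Set.left_mem_Ico.2 zero_lt_one)] with ε hε
  exact key ε hε.1 hε.2
end GepsAux
end
end

section
/- Let 0 < m < n be integers, let p ∈ [m(m+1),∞), and set α = 1 − m(m+1)/p. There exists a constant Γ = Γ(m,p) ∈ [1,∞) such that for every Radon measure μ on ℝⁿ, M_p(μ) ≤ Γ · ∫ K_{μ,p}^α(x,∞) dμ(x). -/
open MeasureTheory Metric Set
open scoped ENNReal NNReal

noncomputable section

private lemma hmin_nonneg {n m : ℕ} (x : Fin (m + 2) → Euc n) : 0 ≤ hmin x :=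
  Real.iInf_nonneg fun _ => infDist_nonneg

set_option maxHeartbeats 1000000 in
private lemma lemA {m n : ℕ} (x : Fin (m + 2) → Euc n) :
    μH[(m + 1 : ℝ)] (convexHull ℝ (Set.range x)) ≤
      ENNReal.ofReal (((m : ℝ) + 1) ^ (m + 1) * (4 * Metric.diam (Set.range x)) ^ m *
        (2 * hmin x)) := by
  classical
  set d := Metric.diam (Set.range x) with hdd
  have hd0 : 0 ≤ d := Metric.diam_nonneg
  have hbdd : Bornology.IsBounded (Set.range x) := (Set.finite_range x).isBounded
  set f : Fin (m + 2) → ℝ := fun j =>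
    infDist (x j) (affineSpan ℝ (Set.range x \ {x j}) : Set (Euc n)) with hf
  have hminf : hmin x = ⨅ j, f j := rfl
  obtain ⟨j₀, hj₀⟩ := Finite.exists_min f
  have hminle : f j₀ ≤ hmin x := by rw [hminf]; exact le_ciInf hj₀
  have h0 : 0 ≤ hmin x := hmin_nonneg x
  set s : Set (Euc n) := Set.range x \ {x j₀} with hs
  rcases s.eq_empty_or_nonempty with hse | ⟨a₀, ha₀⟩
  · have hrx : Set.range x = {x j₀} := by
      refine Set.Subset.antisymm ?_ (Set.singleton_subset_iff.2 ⟨j₀, rfl⟩)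
      rw [← Set.diff_eq_empty]; exact hse
    rw [hrx, convexHull_singleton]
    haveI := MeasureTheory.Measure.noAtoms_hausdorff (Euc n)
      (show (0:ℝ) < (m:ℝ)+1 by positivity)
    rw [measure_singleton]
    exact zero_le
  · set A := affineSpan ℝ s with hA
    have ha₀A : a₀ ∈ A := subset_affineSpan ℝ s ha₀
    set VA := A.direction with hVA
    set kA := Module.finrank ℝ VA with hkA
    have hkAm : kA ≤ m := by
      have hsub : s ⊆ Set.range (fun i : {i : Fin (m+2) // i ≠ j₀} => x i) := by
        rintro y ⟨⟨i, rfl⟩, hy⟩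
        exact ⟨⟨i, fun h => hy (by rw [h]; exact Set.mem_singleton _)⟩, rfl⟩
      have hle : VA ≤ vectorSpan ℝ (Set.range (fun i : {i : Fin (m+2) // i ≠ j₀} => x i)) := by
        rw [hVA, hA, direction_affineSpan]
        exact vectorSpan_mono ℝ hsub
      have hcard : Fintype.card {i : Fin (m+2) // i ≠ j₀} = m + 1 := by
        simp [Fintype.card_subtype_compl]
      exact le_trans (Submodule.finrank_mono hle)
        (finrank_vectorSpan_range_le ℝ _ hcard)
    set b := stdOrthonormalBasis ℝ VA with hb
    set p₀ : Euc n := x j₀ - a₀ with hp₀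
    set w₀ : VA := VA.orthogonalProjection p₀ with hw₀
    set u₀ : Euc n := p₀ - (w₀ : Euc n) with hu₀
    have hu₀orth : ∀ w ∈ VA, (inner ℝ w u₀ : ℝ) = 0 := by
      intro w hw
      have hmem : u₀ ∈ VAᗮ := Submodule.sub_starProjection_mem_orthogonal (K := VA) p₀
      exact (Submodule.mem_orthogonal VA u₀).1 hmem w hw
    have hu₀led : ∀ a ∈ (A : Set (Euc n)), ‖u₀‖ ≤ dist (x j₀) a := by
      intro a haA
      have hwa : a - a₀ ∈ VA := by
        have := AffineSubspace.vsub_mem_direction haA ha₀A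
        rwa [vsub_eq_sub] at this
      have hmemw : (w₀ : Euc n) - (a - a₀) ∈ VA := sub_mem w₀.2 hwa
      have hxa : x j₀ - a = u₀ + ((w₀ : Euc n) - (a - a₀)) := by
        rw [hu₀, hp₀]; abel
      have hip : (inner ℝ u₀ ((w₀ : Euc n) - (a - a₀)) : ℝ) = 0 := by
        rw [real_inner_comm]; exact hu₀orth _ hmemw
      have hsq := norm_add_sq_real u₀ ((w₀ : Euc n) - (a - a₀))
      rw [hip] at hsq
      rw [dist_eq_norm, hxa]
      nlinarith [norm_nonneg (u₀ + ((w₀ : Euc n) - (a - a₀))), norm_nonneg u₀,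
        sq_nonneg ‖(w₀ : Euc n) - (a - a₀)‖]
    have hu₀h : ‖u₀‖ ≤ hmin x := by
      refine le_trans ?_ hminle
      haveI : Nonempty ↥(A : Set (Euc n)) := ⟨⟨a₀, ha₀A⟩⟩
      show ‖u₀‖ ≤ infDist (x j₀) (A : Set (Euc n))
      rw [infDist_eq_iInf]
      exact le_ciInf fun a => hu₀led a a.2
    have hhd : hmin x ≤ d := by
      have h1 : hmin x ≤ f j₀ := by
        rw [hminf]; exact ciInf_le (Set.Finite.bddBelow (Set.finite_range f)) j₀
      have h2 : f j₀ ≤ dist (x j₀) a₀ := infDist_le_dist_of_mem ha₀A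
      have h3 : dist (x j₀) a₀ ≤ d := dist_le_diam_of_mem hbdd ⟨j₀, rfl⟩ ha₀.1
      linarith
    have hbnorm : ∀ i : Fin kA, ‖(b i : Euc n)‖ = 1 := fun i => by
      have h1 := b.orthonormal.1 i
      rw [Submodule.norm_coe]; exact h1
    set ε : Euc n := ‖u₀‖⁻¹ • u₀ with hε
    set e : Fin m ⊕ Unit → Euc n :=
      Sum.elim (fun i => if hi : (i : ℕ) < kA then (b ⟨i, hi⟩ : Euc n) else 0) (fun _ => ε)
      with he
    set g : (Fin m ⊕ Unit → ℝ) → Euc n := fun t => a₀ + ∑ i, t i • e i with hg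
    set c : Fin m ⊕ Unit → ℝ := Sum.elim (fun _ => 2 * d) (fun _ => hmin x) with hc
    set B : Set (Fin m ⊕ Unit → ℝ) := Set.univ.pi fun i => Set.Icc (-(c i)) (c i) with hB
    have hcball : convexHull ℝ (Set.range x) ⊆ Metric.closedBall a₀ d :=
      convexHull_min (fun y hy => Metric.mem_closedBall.2 (dist_le_diam_of_mem hbdd hy ha₀.1))
        (convex_closedBall _ _)
    have hcover : convexHull ℝ (Set.range x) ⊆ g '' B := by
      intro y hy
      have hyd : ‖y - a₀‖ ≤ d := by
        rw [← dist_eq_norm]; exact Metric.mem_closedBall.1 (hcball hy)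
      have hy' := hy
      have hrx : Set.range x = insert (x j₀) s := by
        rw [hs, Set.insert_diff_singleton, Set.insert_eq_self.2 (Set.mem_range_self j₀)]
      rw [hrx, convexHull_insert (s := s) ⟨a₀, ha₀⟩, mem_convexJoin] at hy'
      obtain ⟨xj, hxj, z, hz, hseg⟩ := hy'
      rw [Set.mem_singleton_iff] at hxj
      subst hxj
      obtain ⟨θ, ζ, hθ, hζ, hθζ, hyeq⟩ := hseg
      have hθ1 : θ ≤ 1 := by linarith
      have hzA : z ∈ (A : Set (Euc n)) :=
        convexHull_min (subset_affineSpan ℝ s) (AffineSubspace.convex A) hz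
      have hzd : z - a₀ ∈ VA := by
        have := AffineSubspace.vsub_mem_direction hzA ha₀A
        rwa [vsub_eq_sub] at this
      set w : VA := θ • w₀ + ζ • (⟨z - a₀, hzd⟩ : VA) with hw
      have hcoe : (w : Euc n) = θ • (w₀ : Euc n) + ζ • (z - a₀) := by
        rw [hw]; push_cast; rfl
      have hv : y - a₀ = θ • u₀ + (w : Euc n) := by
        have h1 : ζ = 1 - θ := by linarith
        rw [hcoe, hu₀, hp₀, ← hyeq, h1]
        module
      have hu₀d : ‖u₀‖ ≤ d := le_trans hu₀h hhd
      have hwnorm : ‖(w : Euc n)‖ ≤ 2 * d := by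
        have h1 : (w : Euc n) = (y - a₀) - θ • u₀ := by rw [hv]; abel
        rw [h1]
        have h2 : ‖θ • u₀‖ ≤ d := by
          rw [norm_smul, Real.norm_eq_abs, abs_of_nonneg hθ]
          nlinarith [norm_nonneg u₀]
        calc ‖(y - a₀) - θ • u₀‖ ≤ ‖y - a₀‖ + ‖θ • u₀‖ := norm_sub_le _ _
          _ ≤ 2 * d := by linarith
      set tt : Fin m ⊕ Unit → ℝ := Sum.elim
        (fun i => if hi : (i : ℕ) < kA then b.repr w ⟨i, hi⟩ else 0)
        (fun _ => θ * ‖u₀‖) with htt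
      refine ⟨tt, ?_, ?_⟩
      · intro i _
        rcases i with i | u
        · simp only [htt, Sum.elim_inl, hc]
          by_cases hi : (i : ℕ) < kA
          · rw [dif_pos hi]
            have h1 : |b.repr w ⟨i, hi⟩| ≤ ‖(w : Euc n)‖ := by
              rw [b.repr_apply_apply]
              calc |(inner ℝ (b ⟨i, hi⟩) w : ℝ)| ≤ ‖b ⟨i, hi⟩‖ * ‖w‖ := abs_real_inner_le_norm _ _
                _ = ‖(w : Euc n)‖ := by
                    rw [← Submodule.norm_coe (b ⟨i, hi⟩), hbnorm, one_mul, Submodule.norm_coe]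
            have := abs_le.1 (le_trans h1 hwnorm)
            exact ⟨this.1, this.2⟩
          · rw [dif_neg hi]
            constructor <;> [linarith; linarith]
        · simp only [htt, Sum.elim_inr, hc]
          constructor
          · have : 0 ≤ θ * ‖u₀‖ := mul_nonneg hθ (norm_nonneg _)
            linarith
          · nlinarith [norm_nonneg u₀, hu₀h]
      · show a₀ + ∑ i, tt i • e i = y
        rw [Fintype.sum_sum_type]
        have hUnit : ∑ u : Unit, tt (Sum.inr u) • e (Sum.inr u) = θ • u₀ := by
          simp only [htt, Sum.elim_inr, he, Finset.univ_unique, Finset.sum_singleton, hε]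
          rw [smul_smul]
          by_cases hu : u₀ = 0
          · simp [hu]
          · rw [mul_assoc, mul_inv_cancel₀ (norm_ne_zero_iff.2 hu), mul_one]
        have hFin : ∑ i : Fin m, tt (Sum.inl i) • e (Sum.inl i) = (w : Euc n) := by
          have hstep : ∀ i : Fin m, tt (Sum.inl i) • e (Sum.inl i)
              = (if hi : (i : ℕ) < kA then b.repr w ⟨i, hi⟩ • (b ⟨i, hi⟩ : Euc n) else 0) := by
            intro i
            by_cases hi : (i : ℕ) < kA <;> simp [htt, he, hi]
          rw [Finset.sum_congr rfl fun i _ => hstep i]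
          have hvan : ∀ i ∈ (Finset.univ : Finset (Fin m)),
              i ∉ Finset.univ.map (Fin.castLEEmb hkAm) →
              (if hi : (i : ℕ) < kA then b.repr w ⟨i, hi⟩ • (b ⟨i, hi⟩ : Euc n) else 0) = 0 := by
            intro i _ hi
            rw [dif_neg]
            intro hlt
            exact hi (Finset.mem_map.2 ⟨⟨i, hlt⟩, Finset.mem_univ _, by
              simp [Fin.castLEEmb]⟩)
          rw [← Finset.sum_subset (Finset.subset_univ _) hvan, Finset.sum_map]
          have hterm : ∀ j : Fin kA,
              (if hi : ((Fin.castLEEmb hkAm j : Fin m) : ℕ) < kA then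
                b.repr w ⟨((Fin.castLEEmb hkAm j : Fin m) : ℕ), hi⟩ •
                  (b ⟨((Fin.castLEEmb hkAm j : Fin m) : ℕ), hi⟩ : Euc n) else 0)
              = b.repr w j • (b j : Euc n) := by
            intro j
            rw [dif_pos (by simp [Fin.castLEEmb] : ((Fin.castLEEmb hkAm j : Fin m) : ℕ) < kA)]
            congr 1 <;> congr 1 <;> exact Fin.ext (by simp [Fin.castLEEmb])
          rw [Finset.sum_congr rfl fun j _ => hterm j]
          have := b.sum_repr w
          calc ∑ j : Fin kA, b.repr w j • (b j : Euc n)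
              = ((∑ j : Fin kA, b.repr w j • b j : VA) : Euc n) := by
                push_cast
                rfl
            _ = (w : Euc n) := by rw [this]
        rw [hFin, hUnit]
        have : y = a₀ + (θ • u₀ + (w : Euc n)) := by rw [← hv]; abel
        rw [this]; abel
    have henorm : ∀ i, ‖e i‖ ≤ 1 := by
      rintro (i | u)
      · by_cases hi : (i : ℕ) < kA
        · simp [he, hi, hbnorm]
        · simp [he, hi]
      · simp only [he, Sum.elim_inr, hε]
        by_cases hu : u₀ = 0
        · simp [hu]
        · rw [norm_smul, norm_inv, norm_norm, inv_mul_cancel₀ (norm_ne_zero_iff.2 hu)]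
    have hLip : LipschitzWith ((m : ℝ≥0) + 1) g := by
      apply LipschitzWith.of_dist_le_mul
      intro t t'
      have hsub : g t - g t' = ∑ i, (t i - t' i) • e i := by
        rw [hg]
        simp only [add_sub_add_left_eq_sub, ← Finset.sum_sub_distrib, sub_smul]
      have h1 : dist (g t) (g t') ≤ ∑ i : Fin m ⊕ Unit, dist t t' := by
        rw [dist_eq_norm, hsub]
        calc ‖∑ i, (t i - t' i) • e i‖ ≤ ∑ i, ‖(t i - t' i) • e i‖ := norm_sum_le _ _
          _ ≤ ∑ i : Fin m ⊕ Unit, dist t t' := by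
              refine Finset.sum_le_sum fun i _ => ?_
              rw [norm_smul]
              calc ‖t i - t' i‖ * ‖e i‖ ≤ ‖t i - t' i‖ * 1 :=
                    mul_le_mul_of_nonneg_left (henorm i) (norm_nonneg _)
                _ = dist (t i) (t' i) := by rw [mul_one, dist_eq_norm]
                _ ≤ dist t t' := dist_le_pi_dist t t' i
      rw [Finset.sum_const, Finset.card_univ] at h1
      calc dist (g t) (g t') ≤ (Fintype.card (Fin m ⊕ Unit)) • dist t t' := h1
        _ = (((m : ℝ≥0) + 1 : ℝ≥0) : ℝ) * dist t t' := by
            have hc2 : (Fintype.card (Fin m ⊕ Unit)) = m + 1 := by simp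
            rw [hc2, nsmul_eq_mul]
            congr 1
            push_cast
            ring
    have hμB : μH[(m + 1 : ℝ)] B =
        ENNReal.ofReal (4 * d) ^ m * ENNReal.ofReal (2 * hmin x) := by
      have hcard : ((m : ℝ) + 1) = ((Fintype.card (Fin m ⊕ Unit) : ℕ) : ℝ) := by
        simp [Fintype.card_sum]
      rw [hcard, hausdorffMeasure_pi_real, hB, volume_pi_pi]
      simp only [Real.volume_Icc]
      rw [Fintype.prod_sum_type]
      simp only [hc, Sum.elim_inl, Sum.elim_inr,
        show 2*d - -(2*d) = 4*d from by ring,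
        show hmin x - -(hmin x) = 2*hmin x from by ring]
      rw [Finset.prod_const, Finset.card_univ, Fintype.card_fin]
      simp only [Finset.univ_unique, Finset.prod_singleton]
    calc μH[(m + 1 : ℝ)] (convexHull ℝ (Set.range x))
        ≤ μH[(m + 1 : ℝ)] (g '' B) := measure_mono hcover
      _ ≤ (((m : ℝ≥0) + 1 : ℝ≥0) : ℝ≥0∞) ^ ((m : ℝ) + 1) * μH[(m + 1 : ℝ)] B :=
          hLip.hausdorffMeasure_image_le (by positivity) B
      _ = ENNReal.ofReal (((m : ℝ) + 1) ^ (m + 1) * (4 * d) ^ m * (2 * hmin x)) := by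
          have h4d : (0:ℝ) ≤ 4 * d := by linarith
          have e1 : ENNReal.ofReal (((m:ℝ)+1)^(m+1) * (4*d)^m * (2*hmin x))
              = ENNReal.ofReal ((m:ℝ)+1) ^ (m+1) * ENNReal.ofReal (4*d) ^ m *
                ENNReal.ofReal (2*hmin x) := by
            rw [ENNReal.ofReal_mul (mul_nonneg (by positivity) (pow_nonneg h4d m)),
              ENNReal.ofReal_mul (by positivity),
              ENNReal.ofReal_pow (by positivity : (0:ℝ) ≤ (m:ℝ)+1),
              ENNReal.ofReal_pow h4d]
          have e2 : (((m : ℝ≥0) + 1 : ℝ≥0) : ℝ≥0∞) ^ ((m : ℝ) + 1)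
              = ENNReal.ofReal ((m:ℝ)+1) ^ (m+1) := by
            rw [show ((m : ℝ) + 1) = ((m + 1 : ℕ) : ℝ) by push_cast; ring,
              ENNReal.rpow_natCast]
            congr 1
            rw [← ENNReal.ofReal_coe_nnreal]
            congr 1
            push_cast
            ring
          rw [hμB, e1, e2]
          ring

private lemma lintegral_prod_le_iter {A B : Type*} [MeasurableSpace A] [MeasurableSpace B]
    (μ : Measure A) (ν : Measure B) [SFinite ν] (f : A × B → ℝ≥0∞) :
    ∫⁻ q, f q ∂(μ.prod ν) ≤ ∫⁻ x, ∫⁻ y, f (x, y) ∂ν ∂μ := by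
  obtain ⟨g, hgm, hgle, hgeq⟩ := exists_measurable_le_lintegral_eq (μ.prod ν) f
  rw [hgeq, lintegral_prod _ hgm.aemeasurable]
  exact lintegral_mono fun x => lintegral_mono fun y => hgle (x, y)

private lemma lemB {m n : ℕ} {p : ℝ} (hp0 : 0 < p) (x : Fin (m + 2) → Euc n) :
    kappa x ^ p / ENNReal.ofReal (Metric.diam (Set.range x) ^ p) ≤
      ENNReal.ofReal ((((m : ℝ) + 1) ^ (m + 1) * 4 ^ m * 2) ^ p) *
        ENNReal.ofReal (hmin x ^ p / Metric.diam (Set.range x) ^ (2 * p)) := by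
  set d := Metric.diam (Set.range x) with hdd
  have hd0 : 0 ≤ d := Metric.diam_nonneg
  rcases eq_or_lt_of_le hd0 with hd | hd
  · have hμ : μH[(m + 1 : ℝ)] (convexHull ℝ (Set.range x)) = 0 := by
      have hsing : Set.range x = {x 0} := by
        refine Set.Subset.antisymm (fun y hy => ?_) (Set.singleton_subset_iff.2 ⟨0, rfl⟩)
        have h1 := dist_le_diam_of_mem (Set.finite_range x).isBounded hy (Set.mem_range_self 0)
        rw [← hdd, ← hd] at h1
        have h2 : dist y (x 0) = 0 := le_antisymm h1 dist_nonneg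
        simpa [dist_eq_zero] using h2
      rw [hsing, convexHull_singleton]
      haveI := MeasureTheory.Measure.noAtoms_hausdorff (Euc n)
        (show (0:ℝ) < (m:ℝ)+1 by positivity)
      exact measure_singleton _
    have hk : kappa x = 0 := by rw [kappa, hμ, ENNReal.zero_div]
    rw [hk, ENNReal.zero_rpow_of_pos hp0, ENNReal.zero_div]
    exact zero_le
  · have hA := lemA x
    set h := hmin x with hh
    have hh0 : 0 ≤ h := hmin_nonneg x
    set C : ℝ := ((m:ℝ)+1)^(m+1) * 4^m * 2 with hC
    have hC0 : 0 < C := by positivity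
    have h1 : kappa x ≤ ENNReal.ofReal (C * h / d) := by
      rw [kappa]
      calc μH[(m+1:ℝ)] (convexHull ℝ (Set.range x)) / ENNReal.ofReal (d ^ (m+1))
          ≤ ENNReal.ofReal (((m:ℝ)+1)^(m+1) * (4*d)^m * (2*h)) / ENNReal.ofReal (d^(m+1)) :=
            ENNReal.div_le_div_right hA _
        _ = ENNReal.ofReal ((((m:ℝ)+1)^(m+1) * (4*d)^m * (2*h)) / d^(m+1)) :=
            (ENNReal.ofReal_div_of_pos (pow_pos hd _)).symm
        _ = ENNReal.ofReal (C * h / d) := by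
            congr 1
            rw [hC]
            field_simp
            ring
    have h2 : kappa x ^ p ≤ ENNReal.ofReal ((C * h / d) ^ p) := by
      rw [← ENNReal.ofReal_rpow_of_nonneg (by positivity) hp0.le]
      exact ENNReal.rpow_le_rpow h1 hp0.le
    calc kappa x ^ p / ENNReal.ofReal (d ^ p)
        ≤ ENNReal.ofReal ((C*h/d)^p) / ENNReal.ofReal (d ^ p) := ENNReal.div_le_div_right h2 _
      _ = ENNReal.ofReal ((C*h/d)^p / d^p) :=
          (ENNReal.ofReal_div_of_pos (Real.rpow_pos_of_pos hd _)).symm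
      _ = ENNReal.ofReal (C^p * (h^p / d^(2*p))) := by
          congr 1
          rw [Real.div_rpow (by positivity) hd0, Real.mul_rpow hC0.le hh0]
          rw [show (2:ℝ)*p = p + p by ring, Real.rpow_add hd]
          have hdp : d ^ p ≠ 0 := (Real.rpow_pos_of_pos hd p).ne'
          field_simp
      _ = ENNReal.ofReal (C^p) * ENNReal.ofReal (h^p / d^(2*p)) :=
          ENNReal.ofReal_mul (by positivity)

/-- Remark (previous), first estimate: for `p ≥ m(m+1)` and `α = 1 − m(m+1)/p`,
`M_p(μ) ≤ Γ ∫ K_{μ,p}^α(x,∞) dμ(x)` with `Γ = Γ(m,p) ∈ [1,∞)`. -/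
theorem stmt14 (m : ℕ) (hm : 0 < m) (p : ℝ) (hp : (m * (m + 1) : ℝ) ≤ p) :
    ∃ Γ : ℝ≥0∞, 1 ≤ Γ ∧ Γ ≠ ∞ ∧
      ∀ (n : ℕ), m < n → ∀ (μ : Measure (Euc n)) [IsLocallyFiniteMeasure μ],
        Mp μ m p ≤ Γ * ∫⁻ x, Kcurv μ m p (1 - m * (m + 1) / p) x ∞ ∂μ := by
  classical
  have hm1 : (1:ℝ) ≤ (m:ℝ) := by exact_mod_cast hm
  have hp0 : (0:ℝ) < p := lt_of_lt_of_le (by nlinarith) hp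
  have hpne : p ≠ 0 := ne_of_gt hp0
  set C : ℝ := ((m:ℝ)+1)^(m+1) * 4^m * 2 with hC
  have hΓtop : max (ENNReal.ofReal (C^p)) 1 ≠ ∞ :=
    ne_of_lt (max_lt ENNReal.ofReal_lt_top ENNReal.one_lt_top)
  refine ⟨max (ENNReal.ofReal (C ^ p)) 1, le_max_right _ _, hΓtop, ?_⟩
  intro n hmn μ _
  have hKeq : ∀ x : Euc n, Kcurv μ m p (1 - m * (m + 1) / p) x ∞ =
      ∫⁻ z, ENNReal.ofReal (hmin (Fin.cons x z) ^ p /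
        Metric.diam (Set.range (Fin.cons x z)) ^ (2 * p))
        ∂(Measure.pi fun _ : Fin (m + 1) => μ) := by
    intro x
    rw [Kcurv]
    have hset : (Set.univ.pi fun _ : Fin (m+1) => EMetric.closedBall x ∞) = Set.univ := by
      ext z
      simp [EMetric.mem_closedBall, le_top]
      exact fun _ => Metric.mem_closedEBall.2 le_top
    rw [hset, Measure.restrict_univ]
    refine lintegral_congr fun z => ?_
    congr 2
    rw [show (m * (m + 1) : ℝ) + (1 + (1 - m * (m + 1) / p)) * p = 2 * p from by
      field_simp; ring]
  have step1 : Mp μ m p ≤ (max (ENNReal.ofReal (C^p)) 1) *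
      ∫⁻ x, ENNReal.ofReal (hmin x ^ p / Metric.diam (Set.range x) ^ (2*p))
        ∂(Measure.pi fun _ : Fin (m + 2) => μ) := by
    rw [← lintegral_const_mul' _ _ hΓtop, Mp]
    refine lintegral_mono fun x => ?_
    exact le_trans (lemB hp0 x) (mul_le_mul_left (le_max_left _ _) _)
  have step2 : (∫⁻ x, ENNReal.ofReal (hmin x ^ p / Metric.diam (Set.range x) ^ (2*p))
        ∂(Measure.pi fun _ : Fin (m + 2) => μ)) ≤
      ∫⁻ x, Kcurv μ m p (1 - m * (m + 1) / p) x ∞ ∂μ := by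
    set G : (Fin (m+2) → Euc n) → ℝ≥0∞ :=
      fun x => ENNReal.ofReal (hmin x ^ p / Metric.diam (Set.range x) ^ (2*p)) with hG
    have hmp := (measurePreserving_piFinSuccAbove (fun _ : Fin (m + 2) => μ) 0).symm
    have hemb :=
      (MeasurableEquiv.piFinSuccAbove (fun _ : Fin (m+2) => Euc n) 0).symm.measurableEmbedding
    rw [show (Measure.pi fun _ : Fin (m + 2) => μ) = Measure.pi fun _ : Fin (m + 2) => μ
      from rfl, ← hmp.lintegral_comp_emb hemb G]
    have hcons : ∀ q : Euc n × (Fin (m+1) → Euc n),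
        (MeasurableEquiv.piFinSuccAbove (fun _ : Fin (m+2) => Euc n) 0).symm q
          = Fin.cons q.1 q.2 := by
      intro q
      simp [MeasurableEquiv.piFinSuccAbove, Fin.consEquiv]
    calc (∫⁻ q, G ((MeasurableEquiv.piFinSuccAbove (fun _ : Fin (m+2) => Euc n) 0).symm q)
          ∂(μ.prod (Measure.pi fun _ : Fin (m+1) => μ)))
        = ∫⁻ q, G (Fin.cons q.1 q.2) ∂(μ.prod (Measure.pi fun _ : Fin (m+1) => μ)) :=
          lintegral_congr fun q => by rw [hcons q]
      _ ≤ ∫⁻ x, ∫⁻ z, G (Fin.cons x z) ∂(Measure.pi fun _ : Fin (m+1) => μ) ∂μ :=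
          lintegral_prod_le_iter _ _ _
      _ = ∫⁻ x, Kcurv μ m p (1 - m * (m + 1) / p) x ∞ ∂μ :=
          lintegral_congr fun x => (hKeq x).symm
  calc Mp μ m p ≤ _ := step1
    _ ≤ (max (ENNReal.ofReal (C^p)) 1) *
        ∫⁻ x, Kcurv μ m p (1 - m * (m + 1) / p) x ∞ ∂μ := mul_le_mul_right step2 _
end
end
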